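/- arXiv:0911.1661 — 5 statements merged into one kernel-verified Lean document; each statement's English description precedes it below -/
import Mathlib

section
/- Let Δ_1,...,Δ_r be exchangeable random vectors in ℝ^d (r ≥ 3) with Δ_1+...+Δ_r = x almost surely. Then for distinct indices i, j, l, E[(Δ_i·Δ_j)(Δ_i·Δ_l)] ≤ (2/((r-1)(r-2))) E[ ||x||² ||Δ_i||² + ||Δ_i||⁴ ]. -/
open MeasureTheory
open scoped InnerProductSpace

/-- Let `Δ_1, …, Δ_r` be exchangeable random vectors in `ℝ^d` (`r ≥ 3`) with
`Δ_1 + ⋯ + Δ_r = x` almost surely.  Then for distinct `i, j, l`,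
`E[(Δ_i⬝Δ_j)(Δ_i⬝Δ_l)] ≤ (2/((r−1)(r−2))) E[‖x‖²‖Δ_i‖² + ‖Δ_i‖⁴]`. -/
theorem exchangeable_inner_product_bound {Ω : Type*} [MeasurableSpace Ω] (μ : Measure Ω)
    [IsProbabilityMeasure μ] (d r : ℕ) (hr : 3 ≤ r)
    (Δ : Fin r → Ω → EuclideanSpace ℝ (Fin d))
    (hmeas : ∀ i, Measurable (Δ i))
    (hexch : ∀ σ : Equiv.Perm (Fin r),
      Measure.map (fun ω (k : Fin r) => Δ (σ k) ω) μ
        = Measure.map (fun ω (k : Fin r) => Δ k ω) μ)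
    (x : EuclideanSpace ℝ (Fin d))
    (hsum : ∀ᵐ ω ∂μ, ∑ k, Δ k ω = x)
    (hmom : ∀ k, Integrable (fun ω => ‖Δ k ω‖ ^ 4) μ)
    (i j l : Fin r) (hij : i ≠ j) (hil : i ≠ l) (hjl : j ≠ l) :
    (∫ ω, (⟪Δ i ω, Δ j ω⟫_ℝ) * (⟪Δ i ω, Δ l ω⟫_ℝ) ∂μ)
      ≤ (2 / ((r - 1 : ℝ) * (r - 2 : ℝ))) *
          ∫ ω, ‖x‖ ^ 2 * ‖Δ i ω‖ ^ 2 + ‖Δ i ω‖ ^ 4 ∂μ := by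
  classical
  -- measurability of inner products
  have hmeasf : ∀ k k' : Fin r, Measurable (fun ω => ⟪Δ k ω, Δ k' ω⟫_ℝ) := fun k k' =>
    (hmeas k).inner (hmeas k')
  -- integrability of the products of inner products
  have hint : ∀ k k' : Fin r,
      Integrable (fun ω => ⟪Δ i ω, Δ k ω⟫_ℝ * ⟪Δ i ω, Δ k' ω⟫_ℝ) μ := by
    intro k k'
    refine Integrable.mono'
      (g := fun ω => (2 * ‖Δ i ω‖ ^ 4 + ‖Δ k ω‖ ^ 4 + ‖Δ k' ω‖ ^ 4) / 4)
      (((((hmom i).const_mul 2).add (hmom k)).add (hmom k')).div_const 4)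
      (((hmeasf i k).mul (hmeasf i k')).aestronglyMeasurable) ?_
    filter_upwards with ω
    have h1 := abs_real_inner_le_norm (Δ i ω) (Δ k ω)
    have h2 := abs_real_inner_le_norm (Δ i ω) (Δ k' ω)
    have h1' := abs_nonneg (⟪Δ i ω, Δ k ω⟫_ℝ)
    have h2' := abs_nonneg (⟪Δ i ω, Δ k' ω⟫_ℝ)
    rw [Real.norm_eq_abs, abs_mul]
    nlinarith [sq_nonneg (‖Δ i ω‖ * ‖Δ k ω‖ - ‖Δ i ω‖ * ‖Δ k' ω‖),
      sq_nonneg (‖Δ i ω‖ ^ 2 - ‖Δ k ω‖ ^ 2), sq_nonneg (‖Δ i ω‖ ^ 2 - ‖Δ k' ω‖ ^ 2),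
      mul_le_mul h1 h2 h2' (le_trans h1' h1),
      norm_nonneg (Δ i ω), norm_nonneg (Δ k ω), norm_nonneg (Δ k' ω)]
  -- exchangeability: integrals agree over distinct triples with first coord `i`
  have hswap : ∀ k k' : Fin r, i ≠ k → i ≠ k' → k ≠ k' →
      ∫ ω, ⟪Δ i ω, Δ k ω⟫_ℝ * ⟪Δ i ω, Δ k' ω⟫_ℝ ∂μ
        = ∫ ω, ⟪Δ i ω, Δ j ω⟫_ℝ * ⟪Δ i ω, Δ l ω⟫_ℝ ∂μ := by
    intro k k' hik hik' hkk'
    set σ₁ := Equiv.swap j k with hσ₁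
    set σ : Equiv.Perm (Fin r) := σ₁.trans (Equiv.swap (σ₁ l) k') with hσ
    have hσ₁i : σ₁ i = i := Equiv.swap_apply_of_ne_of_ne hij hik
    have hσ₁li : σ₁ l ≠ i := by
      intro h; exact hil (σ₁.injective (by rw [h, hσ₁i])).symm
    have hσ₁lk : σ₁ l ≠ k := by
      intro h
      have : σ₁ l = σ₁ j := by rw [h, Equiv.swap_apply_left]
      exact hjl (σ₁.injective this).symm
    have hσi : σ i = i := by
      rw [hσ, Equiv.trans_apply, hσ₁i,
        Equiv.swap_apply_of_ne_of_ne (Ne.symm hσ₁li) hik']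
    have hσj : σ j = k := by
      rw [hσ, Equiv.trans_apply, Equiv.swap_apply_left,
        Equiv.swap_apply_of_ne_of_ne (Ne.symm hσ₁lk) hkk']
    have hσl : σ l = k' := by
      rw [hσ, Equiv.trans_apply, Equiv.swap_apply_left]
    have hF : ∀ τ : Equiv.Perm (Fin r),
        AEMeasurable (fun ω (k : Fin r) => Δ (τ k) ω) μ := fun τ =>
      (measurable_pi_lambda _ fun k => hmeas (τ k)).aemeasurable
    have hF1 : AEMeasurable (fun ω (k : Fin r) => Δ k ω) μ :=
      (measurable_pi_lambda _ fun k => hmeas k).aemeasurable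
    have hg : Measurable (fun v : Fin r → EuclideanSpace ℝ (Fin d) =>
        ⟪v i, v j⟫_ℝ * ⟪v i, v l⟫_ℝ) :=
      ((measurable_pi_apply i).inner (measurable_pi_apply j)).mul
        ((measurable_pi_apply i).inner (measurable_pi_apply l))
    calc ∫ ω, ⟪Δ i ω, Δ k ω⟫_ℝ * ⟪Δ i ω, Δ k' ω⟫_ℝ ∂μ
        = ∫ ω, ⟪Δ (σ i) ω, Δ (σ j) ω⟫_ℝ * ⟪Δ (σ i) ω, Δ (σ l) ω⟫_ℝ ∂μ := by
          rw [hσi, hσj, hσl]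
      _ = ∫ v, ⟪v i, v j⟫_ℝ * ⟪v i, v l⟫_ℝ
            ∂(Measure.map (fun ω (k : Fin r) => Δ (σ k) ω) μ) :=
          (integral_map (hF σ) hg.aestronglyMeasurable).symm
      _ = ∫ v, ⟪v i, v j⟫_ℝ * ⟪v i, v l⟫_ℝ
            ∂(Measure.map (fun ω (k : Fin r) => Δ k ω) μ) := by rw [hexch σ]
      _ = ∫ ω, ⟪Δ i ω, Δ j ω⟫_ℝ * ⟪Δ i ω, Δ l ω⟫_ℝ ∂μ :=
          integral_map hF1 hg.aestronglyMeasurable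
  set T : Finset (Fin r) := Finset.univ.erase i with hT
  set A : ℝ := ∫ ω, ⟪Δ i ω, Δ j ω⟫_ℝ * ⟪Δ i ω, Δ l ω⟫_ℝ ∂μ with hA
  -- the off-diagonal function
  set G : Ω → ℝ := fun ω => ∑ k ∈ T, ∑ k' ∈ T.erase k,
    ⟪Δ i ω, Δ k ω⟫_ℝ * ⟪Δ i ω, Δ k' ω⟫_ℝ with hG
  set S : Ω → ℝ := fun ω => ∑ k ∈ T, ⟪Δ i ω, Δ k ω⟫_ℝ with hS
  have hGint : Integrable G μ :=
    integrable_finset_sum _ fun k _ => integrable_finset_sum _ fun k' _ => hint k k'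
  have hS2eq : ∀ ω, S ω ^ 2 = ∑ k ∈ T, ∑ k' ∈ T,
      ⟪Δ i ω, Δ k ω⟫_ℝ * ⟪Δ i ω, Δ k' ω⟫_ℝ := by
    intro ω
    rw [sq, hS, Finset.sum_mul_sum]
  have hS2int : Integrable (fun ω => S ω ^ 2) μ := by
    refine (integrable_finset_sum (μ := μ) T
      (f := fun k ω => ∑ k' ∈ T, ⟪Δ i ω, Δ k ω⟫_ℝ * ⟪Δ i ω, Δ k' ω⟫_ℝ)
      (fun k _ => integrable_finset_sum _ fun k' _ => hint k k')).congr ?_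
    filter_upwards with ω
    rw [hS2eq ω]
  -- pointwise: G ≤ S^2
  have hGleS2 : ∀ ω, G ω ≤ S ω ^ 2 := by
    intro ω
    rw [hS2eq ω, hG]
    have : ∀ k ∈ T, ∑ k' ∈ T.erase k, ⟪Δ i ω, Δ k ω⟫_ℝ * ⟪Δ i ω, Δ k' ω⟫_ℝ
        ≤ ∑ k' ∈ T, ⟪Δ i ω, Δ k ω⟫_ℝ * ⟪Δ i ω, Δ k' ω⟫_ℝ := by
      intro k hk
      have h := Finset.sum_erase_add T
        (fun k' => ⟪Δ i ω, Δ k ω⟫_ℝ * ⟪Δ i ω, Δ k' ω⟫_ℝ) hk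
      beta_reduce at h
      nlinarith [mul_self_nonneg (⟪Δ i ω, Δ k ω⟫_ℝ)]
    exact Finset.sum_le_sum this
  -- a.e. bound on S^2
  have hSbound : ∀ᵐ ω ∂μ, S ω ^ 2 ≤ 2 * (‖x‖ ^ 2 * ‖Δ i ω‖ ^ 2 + ‖Δ i ω‖ ^ 4) := by
    filter_upwards [hsum] with ω hω
    have hsumT : ∑ k ∈ T, Δ k ω = x - Δ i ω := by
      have h := Finset.add_sum_erase Finset.univ (fun k => Δ k ω) (Finset.mem_univ i)
      rw [hω] at h
      rw [hT]
      exact eq_sub_of_add_eq' h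
    have hSeq : S ω = ⟪Δ i ω, x⟫_ℝ - ‖Δ i ω‖ ^ 2 := by
      simp only [hS]
      rw [← inner_sum (𝕜 := ℝ) T (fun k => Δ k ω) (Δ i ω), hsumT, inner_sub_right,
        real_inner_self_eq_norm_sq]
    rw [hSeq]
    have h1 := abs_real_inner_le_norm (Δ i ω) x
    have h1a := abs_le.mp h1
    nlinarith [sq_nonneg (‖Δ i ω‖ * ‖x‖ - ‖Δ i ω‖ ^ 2), sq_nonneg (‖Δ i ω‖ * ‖x‖ + ‖Δ i ω‖ ^ 2),
      norm_nonneg (Δ i ω), norm_nonneg x, h1a.1, h1a.2]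
  -- RHS integrand is integrable
  have hmom2 : Integrable (fun ω => ‖Δ i ω‖ ^ 2) μ := by
    refine Integrable.mono' ((hmom i).add (integrable_const 1))
      (((hmeas i).norm.pow_const 2).aestronglyMeasurable) ?_
    filter_upwards with ω
    simp only [Pi.add_apply]
    rw [Real.norm_eq_abs, abs_of_nonneg (by positivity)]
    nlinarith [norm_nonneg (Δ i ω), sq_nonneg (‖Δ i ω‖ ^ 2 - 1)]
  have hRHSint : Integrable (fun ω => 2 * (‖x‖ ^ 2 * ‖Δ i ω‖ ^ 2 + ‖Δ i ω‖ ^ 4)) μ :=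
    (((hmom2.const_mul (‖x‖ ^ 2)).add (hmom i)).const_mul 2)
  -- integral of G equals (r-1)(r-2) * A
  have hcard : T.card = r - 1 := by
    rw [hT, Finset.card_erase_of_mem (Finset.mem_univ i), Finset.card_univ, Fintype.card_fin]
  have hGint_eq : ∫ ω, G ω ∂μ = ((r - 1 : ℕ) * (r - 2 : ℕ) : ℝ) * A := by
    rw [hG, integral_finset_sum _ fun k _ => integrable_finset_sum _ fun k' _ => hint k k']
    have : ∀ k ∈ T, ∫ ω, ∑ k' ∈ T.erase k, ⟪Δ i ω, Δ k ω⟫_ℝ * ⟪Δ i ω, Δ k' ω⟫_ℝ ∂μ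
        = ((r - 2 : ℕ) : ℝ) * A := by
      intro k hk
      rw [integral_finset_sum _ fun k' _ => hint k k']
      have hik : i ≠ k := (Finset.ne_of_mem_erase hk).symm
      have heach : ∀ k' ∈ T.erase k,
          ∫ ω, ⟪Δ i ω, Δ k ω⟫_ℝ * ⟪Δ i ω, Δ k' ω⟫_ℝ ∂μ = A := by
        intro k' hk'
        exact hswap k k' hik
          ((Finset.ne_of_mem_erase (Finset.mem_of_mem_erase hk'))).symm
          (Finset.ne_of_mem_erase hk').symm
      rw [Finset.sum_congr rfl heach, Finset.sum_const, nsmul_eq_mul]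
      congr 2
      rw [Finset.card_erase_of_mem hk, hcard]
      omega
    rw [Finset.sum_congr rfl this, Finset.sum_const, nsmul_eq_mul, hcard]
    push_cast [Nat.cast_sub (by omega : 1 ≤ r), Nat.cast_sub (by omega : 2 ≤ r)]
    ring
  -- main chain of inequalities
  have hchain : ((r : ℝ) - 1) * ((r : ℝ) - 2) * A
      ≤ 2 * ∫ ω, ‖x‖ ^ 2 * ‖Δ i ω‖ ^ 2 + ‖Δ i ω‖ ^ 4 ∂μ := by
    have e1 : ((r : ℝ) - 1) * ((r : ℝ) - 2) * A = ∫ ω, G ω ∂μ := by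
      rw [hGint_eq]
      push_cast [Nat.cast_sub (by omega : 1 ≤ r), Nat.cast_sub (by omega : 2 ≤ r)]
      ring
    rw [e1, ← integral_const_mul]
    calc ∫ ω, G ω ∂μ ≤ ∫ ω, S ω ^ 2 ∂μ :=
          integral_mono_ae hGint hS2int (Filter.Eventually.of_forall hGleS2)
      _ ≤ ∫ ω, 2 * (‖x‖ ^ 2 * ‖Δ i ω‖ ^ 2 + ‖Δ i ω‖ ^ 4) ∂μ :=
          integral_mono_ae hS2int hRHSint hSbound
  have hrR : (3 : ℝ) ≤ (r : ℝ) := by exact_mod_cast hr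
  have hc : (0 : ℝ) < ((r : ℝ) - 1) * ((r : ℝ) - 2) := by nlinarith
  rw [hA] at hchain ⊢
  rw [div_mul_eq_mul_div, le_div_iff₀ hc]
  linarith
end

section
/- Let τ be a recurrent renewal with inter-arrival law K(n) ∼ c_K n^{−3/2}, and let R_N = |τ ∩ {1,...,N}|. For any positive function α(N) diverging to infinity with α(N) = o(√N), there exists c > 0 such that P(R_N ≥ √N α(N)) ≤ exp(−c α(N)² + o(α(N)²)). -/
set_option maxHeartbeats 1000000


open MeasureTheory ProbabilityTheory Filter Finset
open scoped Classical

/-- The `n`-th renewal epoch of the renewal process with gaps `ξ`. -/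
noncomputable def renewalEpoch {Ω : Type*} (ξ : ℕ → Ω → ℕ) (n : ℕ) (ω : Ω) : ℕ :=
  ∑ i ∈ Finset.range n, ξ i ω

/-- `R_N = |τ ∩ {1,…,N}|`, the number of renewal points in `{1,…,N}`. -/
noncomputable def renewalCount {Ω : Type*} (ξ : ℕ → Ω → ℕ) (N : ℕ) (ω : Ω) : ℕ :=
  ((Finset.Icc 1 N).filter (fun k => ∃ n, renewalEpoch ξ n ω = k)).card

lemma tail_lb {Ω : Type*} [MeasurableSpace Ω] (μ : Measure Ω) [IsProbabilityMeasure μ]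
    (ξ : ℕ → Ω → ℕ) (K : ℕ → ℝ) (cK : ℝ) (hcK : 0 < cK)
    (hmeas : ∀ i, Measurable (ξ i))
    (hdist : ∀ i n, (μ {ω | ξ i ω = n}).toReal = K n)
    (hKasymp : Filter.Tendsto (fun n : ℕ => K n * (n : ℝ) ^ ((3 : ℝ) / 2)) atTop (nhds cK)) :
    ∃ c₂ : ℝ, 0 < c₂ ∧ ∃ n₀ : ℕ, 1 ≤ n₀ ∧ ∀ i M, n₀ ≤ M →
      c₂ / Real.sqrt M ≤ (μ {ω | M ≤ ξ i ω}).toReal := by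
  -- eventual lower bound on K
  have hev : ∀ᶠ n : ℕ in atTop, cK / 2 ≤ K n * (n : ℝ) ^ ((3 : ℝ) / 2) := by
    exact hKasymp.eventually (eventually_ge_nhds (by linarith))
  obtain ⟨n₁, hn₁⟩ := eventually_atTop.mp hev
  refine ⟨3 * cK / 16, by positivity, max n₁ 1, le_max_right _ _, ?_⟩
  intro i M hM
  have hM1 : 1 ≤ M := le_trans (le_max_right _ _) hM
  have hMr : (1 : ℝ) ≤ (M : ℝ) := by exact_mod_cast hM1
  have hMpos : (0 : ℝ) < (M : ℝ) := by linarith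
  -- each K n for n ∈ Icc M (4M) is at least cK/2 / (4M)^{3/2}
  have hKlb : ∀ n ∈ Finset.Icc M (4 * M), cK / 2 / ((4 * M : ℕ) : ℝ) ^ ((3 : ℝ) / 2) ≤ K n := by
    intro n hn
    simp only [Finset.mem_Icc] at hn
    have hn1 : n₁ ≤ n := le_trans (le_trans (le_max_left _ _) hM) hn.1
    have hKn := hn₁ n hn1
    have hnpos : (0 : ℝ) < (n : ℝ) := by
      have : 1 ≤ n := le_trans hM1 hn.1
      exact_mod_cast this
    have hpow_pos : (0 : ℝ) < (n : ℝ) ^ ((3 : ℝ) / 2) := Real.rpow_pos_of_pos hnpos _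
    have hle : ((n : ℝ)) ^ ((3 : ℝ) / 2) ≤ ((4 * M : ℕ) : ℝ) ^ ((3 : ℝ) / 2) := by
      apply Real.rpow_le_rpow (le_of_lt hnpos) _ (by norm_num)
      exact_mod_cast hn.2
    have h1 : cK / 2 / ((4 * M : ℕ) : ℝ) ^ ((3 : ℝ) / 2) ≤ cK / 2 / ((n : ℝ)) ^ ((3 : ℝ) / 2) := by
      apply div_le_div_of_nonneg_left (by positivity) hpow_pos hle
    have h2 : cK / 2 / ((n : ℝ)) ^ ((3 : ℝ) / 2) ≤ K n := by
      rw [div_le_iff₀ hpow_pos]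
      linarith
    linarith
  -- sum over Icc M (4M) of K is a lower bound for the tail probability
  have hsum_le : ∑ n ∈ Finset.Icc M (4 * M), K n ≤ (μ {ω | M ≤ ξ i ω}).toReal := by
    have hmeasset : ∀ n : ℕ, MeasurableSet {ω | ξ i ω = n} := fun n =>
      (hmeas i) (measurableSet_singleton n)
    have hdisj : (↑(Finset.Icc M (4 * M)) : Set ℕ).PairwiseDisjoint
        (fun n => {ω | ξ i ω = n}) := by
      intro a _ b _ hab
      simp only [Function.onFun, Set.disjoint_left]
      intro ω ha hb
      exact hab (by simp only [Set.mem_setOf_eq] at ha hb; omega)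
    have hunion := measure_biUnion_finset (μ := μ) hdisj (fun n _ => hmeasset n)
    have hsub : (⋃ n ∈ Finset.Icc M (4 * M), {ω | ξ i ω = n}) ⊆ {ω | M ≤ ξ i ω} := by
      intro ω hω
      simp only [Set.mem_iUnion, Set.mem_setOf_eq] at hω ⊢
      obtain ⟨n, hn, hωn⟩ := hω
      simp only [Finset.mem_Icc] at hn
      omega
    calc ∑ n ∈ Finset.Icc M (4 * M), K n
        = ∑ n ∈ Finset.Icc M (4 * M), (μ {ω | ξ i ω = n}).toReal := by
          exact Finset.sum_congr rfl fun n _ => (hdist i n).symm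
      _ = (∑ n ∈ Finset.Icc M (4 * M), μ {ω | ξ i ω = n}).toReal := by
          rw [ENNReal.toReal_sum (fun n _ => measure_ne_top μ _)]
      _ = (μ (⋃ n ∈ Finset.Icc M (4 * M), {ω | ξ i ω = n})).toReal := by rw [hunion]
      _ ≤ (μ {ω | M ≤ ξ i ω}).toReal :=
          ENNReal.toReal_mono (measure_ne_top μ _) (measure_mono hsub)
  -- the sum is at least (3M+1) * (cK/2 / (4M)^{3/2})
  have hcard : (Finset.Icc M (4 * M)).card = 3 * M + 1 := by
    rw [Nat.card_Icc]; omega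
  have hsum_lb : (3 * M + 1 : ℝ) * (cK / 2 / ((4 * M : ℕ) : ℝ) ^ ((3 : ℝ) / 2))
      ≤ ∑ n ∈ Finset.Icc M (4 * M), K n := by
    have := Finset.card_nsmul_le_sum (Finset.Icc M (4 * M))
      K (cK / 2 / ((4 * M : ℕ) : ℝ) ^ ((3 : ℝ) / 2)) hKlb
    rw [hcard] at this
    rw [nsmul_eq_mul] at this
    convert this using 2
    all_goals push_cast
    all_goals rfl
  -- compute (4M)^{3/2} = 8 * M * sqrt M
  have hpow : ((4 * M : ℕ) : ℝ) ^ ((3 : ℝ) / 2) = 8 * M * Real.sqrt M := by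
    have h4M : ((4 * M : ℕ) : ℝ) = 4 * (M : ℝ) := by push_cast; ring
    rw [h4M, Real.mul_rpow (by norm_num) (le_of_lt hMpos)]
    have h4 : (4 : ℝ) ^ ((3 : ℝ) / 2) = 8 := by
      rw [show (4 : ℝ) = 2 ^ (2 : ℕ) by norm_num, ← Real.rpow_natCast 2 2,
        ← Real.rpow_mul (by norm_num : (0:ℝ) ≤ 2),
        show ((2 : ℕ) : ℝ) * ((3 : ℝ) / 2) = ((3 : ℕ) : ℝ) by norm_num,
        Real.rpow_natCast]
      norm_num
    have hM32 : (M : ℝ) ^ ((3 : ℝ) / 2) = (M : ℝ) * Real.sqrt M := by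
      rw [show (3 : ℝ) / 2 = 1 + 1 / 2 by norm_num, Real.rpow_add hMpos, Real.rpow_one,
        ← Real.sqrt_eq_rpow]
    rw [h4, hM32]
    ring
  -- final arithmetic
  have hsqrt_pos : 0 < Real.sqrt M := Real.sqrt_pos.mpr hMpos
  have hsq : Real.sqrt M * Real.sqrt M = (M : ℝ) := Real.mul_self_sqrt (le_of_lt hMpos)
  have harith : 3 * cK / 16 / Real.sqrt M
      ≤ (3 * M + 1 : ℝ) * (cK / 2 / ((4 * M : ℕ) : ℝ) ^ ((3 : ℝ) / 2)) := by
    rw [hpow]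
    have hMne : (M : ℝ) ≠ 0 := ne_of_gt hMpos
    have hsne : Real.sqrt M ≠ 0 := ne_of_gt hsqrt_pos
    have e1 : (3 * (M:ℝ) + 1) * (cK / 2 / (8 * M * Real.sqrt M))
        = (3 * (M:ℝ) + 1) * cK / (16 * M * Real.sqrt M) := by
      field_simp
      ring
    rw [e1, div_le_div_iff₀ hsqrt_pos (by positivity)]
    nlinarith [hsq, hMr, hcK.le, hsqrt_pos.le]
  linarith

lemma mgf_ub {Ω : Type*} [MeasurableSpace Ω] (μ : Measure Ω) [IsProbabilityMeasure μ]
    (ξ : ℕ → Ω → ℕ) (hmeas : ∀ i, Measurable (ξ i))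
    (c₂ : ℝ) (hc₂ : 0 < c₂) (n₀ : ℕ) (hn₀ : 1 ≤ n₀)
    (htail : ∀ i M, n₀ ≤ M → c₂ / Real.sqrt M ≤ (μ {ω | M ≤ ξ i ω}).toReal) :
    ∃ s₀ c₁ : ℝ, 0 < s₀ ∧ s₀ ≤ 1 ∧ 0 < c₁ ∧ c₁ ≤ 1 ∧ ∀ i s, 0 < s → s ≤ s₀ →
      mgf (fun ω => (ξ i ω : ℝ)) μ (-s) ≤ 1 - c₁ * Real.sqrt s := by
  have he1 : Real.exp (-1) < 1 := by
    rw [Real.exp_lt_one_iff]; norm_num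
  have hn₀r : (1 : ℝ) ≤ (n₀ : ℝ) := by exact_mod_cast hn₀
  set c₁ := min ((1 - Real.exp (-1)) * c₂ / Real.sqrt 2) 1 with hc₁def
  have hc₁pos : 0 < c₁ := by
    apply lt_min _ one_pos
    apply div_pos (mul_pos (by linarith) hc₂) (by positivity)
  refine ⟨1 / ((n₀ : ℝ) + 1), c₁, by positivity, ?_, hc₁pos, min_le_right _ _, ?_⟩
  · rw [div_le_one (by positivity)]
    linarith
  intro i s hs hss
  set M : ℕ := ⌈1 / s⌉₊ with hMdef
  have hinv : (n₀ : ℝ) + 1 ≤ 1 / s := by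
    rw [le_div_iff₀ hs]
    calc ((n₀:ℝ)+1) * s ≤ ((n₀:ℝ)+1) * (1/((n₀:ℝ)+1)) := by nlinarith
      _ = 1 := by field_simp
  have hMge : n₀ ≤ M := by
    have h1 : (n₀ : ℝ) + 1 ≤ (M : ℝ) := le_trans hinv (Nat.le_ceil _)
    have : (n₀ : ℝ) < (M : ℝ) := by linarith
    exact_mod_cast le_of_lt this
  have hM1 : 1 ≤ M := le_trans hn₀ hMge
  have hMpos : (0 : ℝ) < M := by exact_mod_cast hM1
  have hsM : 1 ≤ s * M := by
    have h := Nat.le_ceil (1 / s)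
    calc (1:ℝ) = s * (1 / s) := by field_simp
      _ ≤ s * M := mul_le_mul_of_nonneg_left h hs.le
  have hs1 : s ≤ 1 := by
    rw [le_div_iff₀ hs] at hinv
    nlinarith
  have hM2s : (M : ℝ) ≤ 2 / s := by
    have h1 : (M : ℝ) < 1 / s + 1 := Nat.ceil_lt_add_one (by positivity)
    have h2 : (1 : ℝ) ≤ 1 / s := by
      rw [le_div_iff₀ hs]; nlinarith [hs1]
    have : 1 / s + 1 ≤ 2 / s := by
      rw [div_add' _ _ _ (ne_of_gt hs), div_le_div_iff₀ hs hs]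
      nlinarith [hs1, hs.le]
    linarith
  set A : Set Ω := {ω | M ≤ ξ i ω} with hAdef
  have hAmeas : MeasurableSet A := (hmeas i) measurableSet_Ici
  have hpt : ∀ ω, Real.exp (-s * (ξ i ω : ℝ)) ≤
      1 - A.indicator (fun _ => 1 - Real.exp (-1)) ω := by
    intro ω
    by_cases hω : ω ∈ A
    · rw [Set.indicator_of_mem hω]
      have hξ : (M : ℝ) ≤ (ξ i ω : ℝ) := by exact_mod_cast hω
      have h1s : (1:ℝ) ≤ s * (ξ i ω : ℝ) := by nlinarith
      have := Real.exp_le_exp.mpr (show -s * (ξ i ω : ℝ) ≤ -1 by nlinarith)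
      linarith
    · rw [Set.indicator_of_notMem hω]
      simp only [sub_zero]
      apply Real.exp_le_one_iff.mpr
      have : (0:ℝ) ≤ (ξ i ω : ℝ) := Nat.cast_nonneg _
      nlinarith
  have hXm : Measurable (fun ω => (ξ i ω : ℝ)) := measurable_from_top.comp (hmeas i)
  have hfm : Measurable (fun ω => Real.exp (-s * (ξ i ω : ℝ))) :=
    (Real.measurable_exp.comp (hXm.const_mul (-s)))
  have hfint : Integrable (fun ω => Real.exp (-s * (ξ i ω : ℝ))) μ := by
    refine Integrable.mono' (integrable_const 1) hfm.aestronglyMeasurable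
      (Filter.Eventually.of_forall fun ω => ?_)
    rw [Real.norm_eq_abs, Real.abs_exp]
    apply Real.exp_le_one_iff.mpr
    have : (0:ℝ) ≤ (ξ i ω : ℝ) := Nat.cast_nonneg _
    nlinarith
  have hgint : Integrable (fun ω => 1 - A.indicator (fun _ => 1 - Real.exp (-1)) ω) μ :=
    (integrable_const 1).sub ((integrable_const _).indicator hAmeas)
  have hint_eq : ∫ ω, (1 - A.indicator (fun _ => 1 - Real.exp (-1)) ω) ∂μ
      = 1 - (1 - Real.exp (-1)) * (μ A).toReal := by
    rw [integral_sub (integrable_const 1) ((integrable_const _).indicator hAmeas),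
      integral_indicator_const _ hAmeas]
    simp [mul_comm, measureReal_def]
  have hmgf : mgf (fun ω => (ξ i ω : ℝ)) μ (-s)
      ≤ 1 - (1 - Real.exp (-1)) * (μ A).toReal := by
    rw [mgf, ← hint_eq]
    exact integral_mono hfint hgint hpt
  have htail' : c₂ / Real.sqrt M ≤ (μ A).toReal := htail i M hMge
  have hsqrts : 0 < Real.sqrt s := Real.sqrt_pos.mpr hs
  have hsqrtM0 : 0 < Real.sqrt M := Real.sqrt_pos.mpr hMpos
  have hsqrtM : Real.sqrt M ≤ Real.sqrt 2 / Real.sqrt s := by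
    have h := Real.sqrt_le_sqrt hM2s
    rwa [Real.sqrt_div (by norm_num : (0:ℝ) ≤ 2) s] at h
  have h2 : Real.sqrt s * Real.sqrt M ≤ Real.sqrt 2 := by
    calc Real.sqrt s * Real.sqrt M ≤ Real.sqrt s * (Real.sqrt 2 / Real.sqrt s) :=
          mul_le_mul_of_nonneg_left hsqrtM hsqrts.le
      _ = Real.sqrt 2 := by field_simp
  have hstep : (1 - Real.exp (-1)) * c₂ / Real.sqrt 2 * Real.sqrt s
      ≤ (1 - Real.exp (-1)) * (c₂ / Real.sqrt M) := by
    have h5 : Real.sqrt s / Real.sqrt 2 ≤ 1 / Real.sqrt M := by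
      rw [div_le_div_iff₀ (by positivity) hsqrtM0]
      nlinarith [h2]
    have h6 : (0:ℝ) ≤ (1 - Real.exp (-1)) * c₂ := mul_nonneg (by linarith) hc₂.le
    calc (1 - Real.exp (-1)) * c₂ / Real.sqrt 2 * Real.sqrt s
        = (1 - Real.exp (-1)) * c₂ * (Real.sqrt s / Real.sqrt 2) := by ring
      _ ≤ (1 - Real.exp (-1)) * c₂ * (1 / Real.sqrt M) := mul_le_mul_of_nonneg_left h5 h6
      _ = (1 - Real.exp (-1)) * (c₂ / Real.sqrt M) := by ring
  have hkey : c₁ * Real.sqrt s ≤ (1 - Real.exp (-1)) * (μ A).toReal := by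
    have h3 : c₁ * Real.sqrt s ≤ (1 - Real.exp (-1)) * c₂ / Real.sqrt 2 * Real.sqrt s :=
      mul_le_mul_of_nonneg_right (min_le_left _ _) hsqrts.le
    have h4 : (1 - Real.exp (-1)) * (c₂ / Real.sqrt M)
        ≤ (1 - Real.exp (-1)) * (μ A).toReal :=
      mul_le_mul_of_nonneg_left htail' (by linarith)
    linarith
  linarith

lemma epoch_le_of_count_ge {Ω : Type*} (ξ : ℕ → Ω → ℕ) (ω : Ω) (hω : ∀ i, 1 ≤ ξ i ω)
    (m N : ℕ) (h : m ≤ renewalCount ξ N ω) : renewalEpoch ξ m ω ≤ N := by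
  by_contra hlt
  push_neg at hlt
  have hmono : StrictMono (fun n => renewalEpoch ξ n ω) := by
    apply strictMono_nat_of_lt_succ
    intro n
    have : renewalEpoch ξ (n+1) ω = renewalEpoch ξ n ω + ξ n ω := by
      simp [renewalEpoch, Finset.sum_range_succ]
    have h2 := hω n
    omega
  have hsub : (Finset.Icc 1 N).filter (fun k => ∃ n, renewalEpoch ξ n ω = k)
      ⊆ (Finset.Ico 1 m).image (fun n => renewalEpoch ξ n ω) := by
    intro k hk
    simp only [Finset.mem_filter, Finset.mem_Icc] at hk
    obtain ⟨⟨hk1, hkN⟩, n, hn⟩ := hk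
    have hn0 : n ≠ 0 := by
      rintro rfl
      simp [renewalEpoch] at hn
      omega
    have hnm : n < m := by
      by_contra h'
      push_neg at h'
      have := hmono.monotone h'
      omega
    exact Finset.mem_image.mpr ⟨n, Finset.mem_Ico.mpr ⟨Nat.one_le_iff_ne_zero.mpr hn0, hnm⟩, hn⟩
  have hcard := (Finset.card_le_card hsub).trans Finset.card_image_le
  rw [Nat.card_Ico] at hcard
  have hm0 : m ≠ 0 := by
    rintro rfl
    simp [renewalEpoch] at hlt
  unfold renewalCount at h
  omega

/-- For a recurrent renewal with inter-arrival law `K(n) ∼ c_K n^{−3/2}` and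
`R_N = |τ ∩ {1,…,N}|`: for any positive `α(N) → ∞` with `α(N) = o(√N)`, there is `c > 0`
such that `P(R_N ≥ √N α(N)) ≤ exp(−c α(N)² + o(α(N)²))`. -/
theorem renewalCount_tail_bound {Ω : Type*} [MeasurableSpace Ω] (μ : Measure Ω)
    [IsProbabilityMeasure μ] (ξ : ℕ → Ω → ℕ) (K : ℕ → ℝ) (cK : ℝ) (hcK : 0 < cK)
    (hmeas : ∀ i, Measurable (ξ i))
    (hindep : iIndepFun ξ μ)
    (hdist : ∀ i n, (μ {ω | ξ i ω = n}).toReal = K n)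
    (hK0 : K 0 = 0)
    (hKasymp : Tendsto (fun n : ℕ => K n * (n : ℝ) ^ ((3 : ℝ) / 2)) atTop (nhds cK))
    (α : ℕ → ℝ) (hαpos : ∀ N, 0 < α N) (hαtop : Tendsto α atTop atTop)
    (hαo : α =o[atTop] (fun N : ℕ => Real.sqrt N)) :
    ∃ c : ℝ, 0 < c ∧ ∃ e : ℕ → ℝ, e =o[atTop] (fun N => (α N) ^ 2) ∧
      ∀ N : ℕ,
        (μ {ω | Real.sqrt N * α N ≤ (renewalCount ξ N ω : ℝ)}).toReal
          ≤ Real.exp (-c * (α N) ^ 2 + e N) := by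
  -- constants
  obtain ⟨c₂, hc₂, n₀, hn₀, htail⟩ := tail_lb μ ξ K cK hcK hmeas hdist hKasymp
  obtain ⟨s₀, c₁, hs₀, hs₀1, hc₁, hc₁1, hmgf⟩ := mgf_ub μ ξ hmeas c₂ hc₂ n₀ hn₀ htail
  set t₀ : ℝ := min (c₁ ^ 2 / 4) s₀ with ht₀def
  have ht₀ : 0 < t₀ := lt_min (by positivity) hs₀
  have hsqrt_t₀ : Real.sqrt t₀ ≤ c₁ / 2 := by
    have h1 : t₀ ≤ c₁ ^ 2 / 4 := min_le_left _ _
    have h2 : Real.sqrt (c₁ ^ 2 / 4) = c₁ / 2 := by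
      rw [show c₁ ^ 2 / 4 = (c₁ / 2) ^ 2 by ring, Real.sqrt_sq (by positivity)]
    calc Real.sqrt t₀ ≤ Real.sqrt (c₁ ^ 2 / 4) := Real.sqrt_le_sqrt h1
      _ = c₁ / 2 := h2
  have hsqrt_t₀pos : 0 < Real.sqrt t₀ := Real.sqrt_pos.mpr ht₀
  set c : ℝ := c₁ * Real.sqrt t₀ / 2 with hcdef
  have hc : 0 < c := by positivity
  -- a.s. all gaps positive
  have hae : ∀ᵐ ω ∂μ, ∀ i, 1 ≤ ξ i ω := by
    rw [ae_all_iff]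
    intro i
    have h0 : μ {ω | ξ i ω = 0} = 0 := by
      have h := hdist i 0
      rw [hK0] at h
      rcases (ENNReal.toReal_eq_zero_iff _).mp h with h' | h'
      · exact h'
      · exact absurd h' (measure_ne_top μ _)
    have : {ω | ¬ 1 ≤ ξ i ω} ⊆ {ω | ξ i ω = 0} := fun ω hω => by
      simp only [Set.mem_setOf_eq] at hω ⊢; omega
    exact measure_mono_null this h0
  -- the real-valued gaps
  set Xi : ℕ → Ω → ℝ := fun i ω => (ξ i ω : ℝ) with hXidef
  have hXimeas : ∀ i, Measurable (Xi i) := fun i => measurable_from_top.comp (hmeas i)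
  have hXiindep : iIndepFun Xi μ :=
    hindep.comp (fun _ => (Nat.cast : ℕ → ℝ)) (fun _ => measurable_from_top)
  -- α N ^2 / N → 0
  have hdivzero : Tendsto (fun N : ℕ => α N ^ 2 / N) atTop (nhds 0) := by
    have h1 : Tendsto (fun N : ℕ => α N / Real.sqrt N) atTop (nhds 0) :=
      hαo.tendsto_div_nhds_zero
    have h2 := h1.mul h1
    rw [mul_zero] at h2
    apply h2.congr'
    filter_upwards [eventually_ge_atTop 1] with N hN
    have hNpos : (0:ℝ) < N := by exact_mod_cast hN
    rw [div_mul_div_comm, Real.mul_self_sqrt hNpos.le]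
    ring_nf
  -- main eventual bound
  have hmain : ∀ᶠ N : ℕ in atTop,
      (μ {ω | Real.sqrt N * α N ≤ (renewalCount ξ N ω : ℝ)}).toReal
        ≤ Real.exp (-c * (α N) ^ 2) := by
    have hcond : ∀ᶠ N in atTop, t₀ * (α N ^ 2 / N) ≤ s₀ := by
      have := (hdivzero.const_mul t₀)
      rw [mul_zero] at this
      exact this.eventually_le_const hs₀  -- may not exist; fallback below
    filter_upwards [eventually_ge_atTop 1, hcond] with N hN1 hsle
    have hNpos : (0:ℝ) < N := by exact_mod_cast hN1
    have hα := hαpos N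
    set s : ℝ := t₀ * α N ^ 2 / N with hsdef
    have hspos : 0 < s := by positivity
    have hss₀ : s ≤ s₀ := by rw [hsdef, mul_div_assoc]; exact hsle
    set m : ℕ := ⌈Real.sqrt N * α N⌉₊ with hmdef
    have hmge : Real.sqrt N * α N ≤ (m : ℝ) := Nat.le_ceil _
    -- event rewrite
    have hev_eq : {ω | Real.sqrt N * α N ≤ (renewalCount ξ N ω : ℝ)}
        = {ω | m ≤ renewalCount ξ N ω} := by
      ext ω
      simp only [Set.mem_setOf_eq]
      exact (Nat.ceil_le).symm
    -- step 1: a.e. inclusion into the epoch event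
    have hstep1 : μ {ω | m ≤ renewalCount ξ N ω}
        ≤ μ {ω | (∑ i ∈ Finset.range m, Xi i) ω ≤ (N : ℝ)} := by
      apply measure_mono_ae
      filter_upwards [hae] with ω hω hm
      have h := epoch_le_of_count_ge ξ ω hω m N hm
      have hcast : (∑ i ∈ Finset.range m, Xi i) ω = ((renewalEpoch ξ m ω : ℕ) : ℝ) := by
        rw [Finset.sum_apply, renewalEpoch, Nat.cast_sum]
      show (∑ i ∈ Finset.range m, Xi i) ω ≤ (N : ℝ)
      rw [hcast]
      exact_mod_cast h
    -- integrability
    have hint : ∀ i ∈ Finset.range m, Integrable (fun ω => Real.exp (-s * Xi i ω)) μ := by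
      intro i _
      refine Integrable.mono' (integrable_const 1)
        ((Real.measurable_exp.comp ((hXimeas i).const_mul (-s))).aestronglyMeasurable)
        (Filter.Eventually.of_forall fun ω => ?_)
      rw [Real.norm_eq_abs, Real.abs_exp]
      apply Real.exp_le_one_iff.mpr
      have : (0:ℝ) ≤ Xi i ω := Nat.cast_nonneg _
      nlinarith
    have hintsum : Integrable (fun ω => Real.exp (-s * (∑ i ∈ Finset.range m, Xi i) ω)) μ :=
      hXiindep.integrable_exp_mul_sum hXimeas hint
    -- Chernoff
    have hcher := measure_le_le_exp_mul_mgf (μ := μ) (X := ∑ i ∈ Finset.range m, Xi i)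
      (N : ℝ) (show -s ≤ 0 by linarith) hintsum
    -- mgf product bound
    have hprod : mgf (∑ i ∈ Finset.range m, Xi i) μ (-s) ≤ (1 - c₁ * Real.sqrt s) ^ m := by
      rw [hXiindep.mgf_sum hXimeas]
      calc ∏ i ∈ Finset.range m, mgf (Xi i) μ (-s)
          ≤ ∏ _i ∈ Finset.range m, (1 - c₁ * Real.sqrt s) :=
            Finset.prod_le_prod (fun i _ => mgf_nonneg) (fun i _ => hmgf i s hspos hss₀)
        _ = (1 - c₁ * Real.sqrt s) ^ m := by rw [Finset.prod_const, Finset.card_range]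
    have hbase_nonneg : 0 ≤ 1 - c₁ * Real.sqrt s := by
      have h1 : Real.sqrt s ≤ 1 := by
        rw [show (1:ℝ) = Real.sqrt 1 by rw [Real.sqrt_one]]
        exact Real.sqrt_le_sqrt (le_trans hss₀ hs₀1)
      nlinarith
    have hexp_pow : (1 - c₁ * Real.sqrt s) ^ m ≤ Real.exp (-(c₁ * Real.sqrt s)) ^ m := by
      apply pow_le_pow_left₀ hbase_nonneg
      linarith [Real.add_one_le_exp (-(c₁ * Real.sqrt s))]
    rw [← Real.exp_nat_mul] at hexp_pow
    -- combine
    have htotal : (μ {ω | (∑ i ∈ Finset.range m, Xi i) ω ≤ (N : ℝ)}).toReal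
        ≤ Real.exp (s * N + m * (-(c₁ * Real.sqrt s))) := by
      rw [Real.exp_add]
      calc (μ {ω | (∑ i ∈ Finset.range m, Xi i) ω ≤ (N : ℝ)}).toReal
          ≤ Real.exp (-(-s) * N) * mgf (∑ i ∈ Finset.range m, Xi i) μ (-s) := hcher
        _ ≤ Real.exp (s * N) * Real.exp ((m : ℝ) * (-(c₁ * Real.sqrt s))) := by
            rw [neg_neg]
            exact mul_le_mul_of_nonneg_left (le_trans hprod hexp_pow) (Real.exp_pos _).le
    -- exponent estimate
    have hsN : s * N = t₀ * α N ^ 2 := by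
      rw [hsdef]; field_simp
    have hsqrt_s : Real.sqrt s * Real.sqrt N = Real.sqrt t₀ * α N := by
      rw [← Real.sqrt_mul hspos.le, hsN, Real.sqrt_mul ht₀.le, Real.sqrt_sq hα.le]
    have hmlb : c₁ * Real.sqrt t₀ * α N ^ 2 ≤ (m : ℝ) * (c₁ * Real.sqrt s) := by
      have hsqrtspos : 0 < Real.sqrt s := Real.sqrt_pos.mpr hspos
      have h1 : Real.sqrt N * α N * (c₁ * Real.sqrt s) ≤ (m : ℝ) * (c₁ * Real.sqrt s) := by
        apply mul_le_mul_of_nonneg_right hmge (by positivity)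
      have h2 : Real.sqrt N * α N * (c₁ * Real.sqrt s) = c₁ * (Real.sqrt s * Real.sqrt N) * α N := by
        ring
      rw [h2, hsqrt_s] at h1
      calc c₁ * Real.sqrt t₀ * α N ^ 2 = c₁ * (Real.sqrt t₀ * α N) * α N := by ring
        _ ≤ (m : ℝ) * (c₁ * Real.sqrt s) := h1
    have hexp_le : s * N + m * (-(c₁ * Real.sqrt s)) ≤ -c * α N ^ 2 := by
      rw [hsN]
      have hα2 : 0 ≤ α N ^ 2 := sq_nonneg _
      have ht₀le : t₀ ≤ c₁ * Real.sqrt t₀ / 2 := by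
        have : t₀ = Real.sqrt t₀ * Real.sqrt t₀ := (Real.mul_self_sqrt ht₀.le).symm
        nlinarith [hsqrt_t₀, hsqrt_t₀pos]
      rw [hcdef]
      nlinarith [hmlb]
    calc (μ {ω | Real.sqrt N * α N ≤ (renewalCount ξ N ω : ℝ)}).toReal
        = (μ {ω | m ≤ renewalCount ξ N ω}).toReal := by rw [hev_eq]
      _ ≤ (μ {ω | (∑ i ∈ Finset.range m, Xi i) ω ≤ (N : ℝ)}).toReal :=
          ENNReal.toReal_mono (measure_ne_top μ _) hstep1
      _ ≤ Real.exp (s * N + m * (-(c₁ * Real.sqrt s))) := htotal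
      _ ≤ Real.exp (-c * α N ^ 2) := Real.exp_le_exp.mpr hexp_le
  -- define the error term
  refine ⟨c, hc, fun N =>
    if (μ {ω | Real.sqrt N * α N ≤ (renewalCount ξ N ω : ℝ)}).toReal
        ≤ Real.exp (-c * (α N) ^ 2) then 0 else c * (α N) ^ 2 + 1, ?_, ?_⟩
  · apply (Asymptotics.isLittleO_zero _ _).congr' _ (Filter.EventuallyEq.refl _ _)
    filter_upwards [hmain] with N hN
    rw [if_pos hN]
  · intro N
    by_cases hN : (μ {ω | Real.sqrt N * α N ≤ (renewalCount ξ N ω : ℝ)}).toReal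
        ≤ Real.exp (-c * (α N) ^ 2)
    · simp only [if_pos hN, add_zero]
      exact hN
    · simp only [if_neg hN]
      have h1 : (μ {ω | Real.sqrt N * α N ≤ (renewalCount ξ N ω : ℝ)}).toReal ≤ 1 := by
        calc (μ _).toReal ≤ (μ Set.univ).toReal :=
              ENNReal.toReal_mono (measure_ne_top μ _) (measure_mono (Set.subset_univ _))
          _ = 1 := by simp
      calc (μ {ω | Real.sqrt N * α N ≤ (renewalCount ξ N ω : ℝ)}).toReal ≤ 1 := h1
        _ ≤ Real.exp (-c * (α N) ^ 2 + (c * (α N) ^ 2 + 1)) := by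
            rw [show -c * (α N) ^ 2 + (c * (α N) ^ 2 + 1) = 1 by ring]
            linarith [Real.exp_one_gt_d9]
end

section
/- Let τ be a recurrent renewal whose inter-arrival law satisfies K(n) ≥ c' n^{−3/2} for all n. Then for every A > 0 there exists g_0 > 0 such that for all 0 < g ≤ g_0, P( ∑_{n=1}^{⌈A√L⌉} √(τ_n − τ_{n−1}) ≤ g √L log L ) ≤ exp((g c_1 − c_2 A)√(log L)) for constants c_1, c_2 > 0 independent of L; in particular this probability tends to 0 as L → ∞ if g is small enough. -/
open MeasureTheory ProbabilityTheory Filter Finset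

private lemma aux_one_sub_exp {x : ℝ} (h0 : 0 ≤ x) (h1 : x ≤ 1) :
    (1 - Real.exp (-1)) * x ≤ 1 - Real.exp (-x) := by
  have hc := convexOn_exp.2 (Set.mem_univ (0 : ℝ)) (Set.mem_univ (-1 : ℝ))
    (by linarith : (0:ℝ) ≤ 1 - x) h0 (by ring)
  simp only [smul_eq_mul, mul_zero, mul_neg_one, zero_add, Real.exp_zero, mul_one] at hc
  nlinarith [hc]

/-- Let the gaps `Δτ_n = τ_n − τ_{n−1}` be i.i.d. with law `K` satisfying
`K(n) ≥ c' n^{−3/2}`.  For every `A > 0` there is `g₀ > 0` and constants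
`c₁, c₂ > 0` (independent of `L`) such that for all `0 < g ≤ g₀`,
`g c₁ − c₂ A < 0` and, for all large `L`,
`P(∑_{n=1}^{⌈A√L⌉} √Δτ_n ≤ g √L log L) ≤ exp((g c₁ − c₂ A)√(log L))`;
in particular this probability tends to `0` as `L → ∞`. -/
theorem sum_sqrt_gaps_small_probability {Ω : Type*} [MeasurableSpace Ω] (μ : Measure Ω)
    [IsProbabilityMeasure μ] (ξ : ℕ → Ω → ℕ) (K : ℕ → ℝ) (c' : ℝ) (hc' : 0 < c')
    (hmeas : ∀ i, Measurable (ξ i))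
    (hindep : iIndepFun ξ μ)
    (hdist : ∀ i n, (μ {ω | ξ i ω = n}).toReal = K n)
    (hK0 : K 0 = 0)
    (hKlower : ∀ n : ℕ, 1 ≤ n → c' * (n : ℝ) ^ (-(3 : ℝ) / 2) ≤ K n)
    (A : ℝ) (hA : 0 < A) :
    ∃ g₀ : ℝ, 0 < g₀ ∧ ∃ c₁ : ℝ, 0 < c₁ ∧ ∃ c₂ : ℝ, 0 < c₂ ∧
      ∀ g : ℝ, 0 < g → g ≤ g₀ →
        g * c₁ - c₂ * A < 0 ∧
        ∃ L₀ : ℕ, ∀ L : ℕ, L₀ ≤ L →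
          (μ {ω | ∑ n ∈ Finset.range ⌈A * Real.sqrt L⌉₊, Real.sqrt (ξ n ω)
                ≤ g * Real.sqrt L * Real.log L}).toReal
            ≤ Real.exp ((g * c₁ - c₂ * A) * Real.sqrt (Real.log L)) := by
  have hexp1 : Real.exp (-1) < 1 := by
    rw [Real.exp_lt_one_iff]; norm_num
  set c₂ : ℝ := c' * (1 - Real.exp (-1)) with hc₂def
  have hc₂ : 0 < c₂ := mul_pos hc' (by linarith)
  refine ⟨c₂ * A / 2, by positivity, 1, one_pos, c₂, hc₂, fun g hg hgle => ?_⟩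
  refine ⟨by nlinarith, 3, fun L hL => ?_⟩
  have hL3 : (3:ℝ) ≤ (L:ℝ) := by exact_mod_cast hL
  have hLpos : (0:ℝ) < L := by linarith
  have hlog1 : (1:ℝ) ≤ Real.log L := by
    rw [Real.le_log_iff_exp_le hLpos]
    calc Real.exp 1 ≤ 2.7182818286 := Real.exp_one_lt_d9.le
      _ ≤ (L:ℝ) := by linarith
  have hlogpos : (0:ℝ) < Real.log L := by linarith
  set sl := Real.sqrt (L:ℝ) with hsl
  set sll := Real.sqrt (Real.log L) with hsll
  have hslpos : 0 < sl := Real.sqrt_pos.mpr hLpos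
  have hsllpos : 0 < sll := Real.sqrt_pos.mpr hlogpos
  have hsll2 : sll * sll = Real.log L := Real.mul_self_sqrt hlogpos.le
  have hprodsq : Real.sqrt ((L:ℝ) * Real.log L) = sl * sll := Real.sqrt_mul hLpos.le _
  set lam : ℝ := (sl * sll)⁻¹ with hlam
  have hlampos : 0 < lam := by positivity
  set N := ⌈A * sl⌉₊ with hN
  set M := ⌊(L:ℝ) * Real.log L⌋₊ with hM
  set X : ℕ → Ω → ℝ := fun i ω => Real.sqrt (ξ i ω) with hX
  have hXmeas : ∀ i, Measurable (X i) := fun i =>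
    (measurable_from_nat (f := fun n : ℕ => Real.sqrt n)).comp (hmeas i)
  have hXnn : ∀ i ω, 0 ≤ X i ω := fun i ω => Real.sqrt_nonneg _
  have hXindep : iIndepFun X μ :=
    hindep.comp (fun _ (n : ℕ) => Real.sqrt n) (fun _ => measurable_from_nat)
  have hint : ∀ f : Ω → ℝ, Measurable f → (∀ ω, 0 ≤ f ω) →
      Integrable (fun ω => Real.exp (-lam * f ω)) μ := by
    intro f hf hfn
    refine Integrable.mono' (integrable_const 1)
      ((hf.const_mul (-lam)).exp.aestronglyMeasurable) (Filter.Eventually.of_forall fun ω => ?_)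
    rw [Real.norm_eq_abs, abs_of_pos (Real.exp_pos _), Real.exp_le_one_iff]
    nlinarith [hfn ω]
  set S : Ω → ℝ := fun ω => ∑ i ∈ Finset.range N, X i ω with hS
  have hSmeas : Measurable S := by
    apply Finset.measurable_sum
    exact fun i _ => hXmeas i
  have hSnn : ∀ ω, 0 ≤ S ω := fun ω => Finset.sum_nonneg fun i _ => hXnn i ω
  have hSint := hint S hSmeas hSnn
  have chern := measure_le_le_exp_mul_mgf (μ := μ) (X := S)
    (g * sl * Real.log L) (t := -lam) (by linarith) hSint
  have hSeq : S = ∑ i ∈ Finset.range N, X i := by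
    ext ω; simp [hS, Finset.sum_apply]
  have hmgfsum : mgf S μ (-lam) = ∏ i ∈ Finset.range N, mgf (X i) μ (-lam) := by
    rw [hSeq]; exact hXindep.mgf_sum hXmeas _
  -- per-factor bound
  have hfactor : ∀ i, mgf (X i) μ (-lam) ≤ Real.exp (-(c₂ * lam * Real.log L)) := by
    intro i
    have hqint := hint (X i) (hXmeas i) (hXnn i)
    have h1int : Integrable (fun ω => 1 - Real.exp (-lam * X i ω)) μ :=
      (integrable_const 1).sub hqint
    have hsum_le : ∑ n ∈ Finset.Icc 1 M, K n * (1 - Real.exp (-lam * Real.sqrt n)) ≤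
        ∫ ω, (1 - Real.exp (-lam * X i ω)) ∂μ := by
      set E : ℕ → Set Ω := fun n => {ω | ξ i ω = n} with hE
      have hEmeas : ∀ n, MeasurableSet (E n) := fun n => hmeas i (measurableSet_singleton n)
      have hstep1 : ∀ n, ∫ ω in E n, (1 - Real.exp (-lam * X i ω)) ∂μ
          = K n * (1 - Real.exp (-lam * Real.sqrt n)) := by
        intro n
        rw [setIntegral_congr_fun (hEmeas n)
          (fun ω hω => by
            simp only [hX]
            rw [show ξ i ω = n from hω]),
          setIntegral_const, smul_eq_mul, ← hdist i n]; rfl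
      have hdisj : Set.Pairwise ↑(Finset.Icc 1 M) (Function.onFun Disjoint E) := by
        intro m _ n _ hmn
        simp only [Function.onFun, hE]
        rw [Set.disjoint_left]
        rintro ω hm hn
        have hm' : ξ i ω = m := hm
        have hn' : ξ i ω = n := hn
        exact hmn (hm'.symm.trans hn')
      have hbi := integral_biUnion_finset (μ := μ)
        (f := fun ω => 1 - Real.exp (-lam * X i ω)) (Finset.Icc 1 M)
        (fun n _ => hEmeas n) hdisj (fun n _ => h1int.integrableOn)
      calc ∑ n ∈ Finset.Icc 1 M, K n * (1 - Real.exp (-lam * Real.sqrt n))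
          = ∫ ω in ⋃ n ∈ Finset.Icc 1 M, E n, (1 - Real.exp (-lam * X i ω)) ∂μ := by
            rw [hbi]; exact (Finset.sum_congr rfl fun n _ => (hstep1 n).symm)
        _ ≤ ∫ ω, (1 - Real.exp (-lam * X i ω)) ∂μ := by
            apply setIntegral_le_integral h1int
            filter_upwards with ω
            have h0 : -lam * X i ω ≤ 0 := by nlinarith [hXnn i ω]
            have := Real.exp_le_one_iff.mpr h0
            simp only [Pi.zero_apply]
            linarith
    have hterm : ∀ n ∈ Finset.Icc 1 M, c₂ * lam * (n:ℝ)⁻¹ ≤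
        K n * (1 - Real.exp (-lam * Real.sqrt n)) := by
      intro n hn
      rw [Finset.mem_Icc] at hn
      have hn1 : (1:ℝ) ≤ (n:ℝ) := by exact_mod_cast hn.1
      have hnpos : (0:ℝ) < n := by linarith
      have hsqn : Real.sqrt n ≤ sl * sll := by
        rw [← hprodsq]
        apply Real.sqrt_le_sqrt
        calc (n:ℝ) ≤ (M:ℝ) := by exact_mod_cast hn.2
          _ ≤ (L:ℝ) * Real.log L := Nat.floor_le (by positivity)
      have hx1 : lam * Real.sqrt n ≤ 1 := by
        rw [hlam, inv_mul_le_iff₀ (by positivity), mul_one]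
        exact hsqn
      have hx0 : 0 ≤ lam * Real.sqrt n := by positivity
      have hexp := aux_one_sub_exp hx0 hx1
      rw [show -(lam * Real.sqrt n) = -lam * Real.sqrt n by ring] at hexp
      have hK := hKlower n hn.1
      have hKnn : 0 ≤ K n := by rw [← hdist i n]; exact ENNReal.toReal_nonneg
      have hpow : (n:ℝ) ^ (-(3:ℝ)/2) * Real.sqrt n = (n:ℝ)⁻¹ := by
        rw [Real.sqrt_eq_rpow, ← Real.rpow_add hnpos]
        norm_num [Real.rpow_neg_one]
      calc c₂ * lam * (n:ℝ)⁻¹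
          = (c' * (n:ℝ) ^ (-(3:ℝ)/2)) * ((1 - Real.exp (-1)) * (lam * Real.sqrt n)) := by
            rw [hc₂def, ← hpow]; ring
        _ ≤ K n * (1 - Real.exp (-lam * Real.sqrt n)) :=
            mul_le_mul hK hexp (mul_nonneg (by linarith) hx0) hKnn
    have hharm : Real.log L ≤ ∑ n ∈ Finset.Icc 1 M, (n:ℝ)⁻¹ := by
      have h1 : Real.log L ≤ Real.log ((M:ℝ)+1) := by
        apply Real.log_le_log hLpos
        have hfl := Nat.lt_floor_add_one ((L:ℝ) * Real.log L)
        nlinarith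
      have h2 := log_add_one_le_harmonic M
      rw [harmonic_eq_sum_Icc] at h2
      push_cast at h2
      linarith
    have hq_lb : c₂ * lam * Real.log L ≤ ∫ ω, (1 - Real.exp (-lam * X i ω)) ∂μ :=
      calc c₂ * lam * Real.log L ≤ c₂ * lam * ∑ n ∈ Finset.Icc 1 M, (n:ℝ)⁻¹ := by
            apply mul_le_mul_of_nonneg_left hharm (by positivity)
        _ = ∑ n ∈ Finset.Icc 1 M, c₂ * lam * (n:ℝ)⁻¹ := by rw [Finset.mul_sum]
        _ ≤ ∑ n ∈ Finset.Icc 1 M, K n * (1 - Real.exp (-lam * Real.sqrt n)) :=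
            Finset.sum_le_sum hterm
        _ ≤ _ := hsum_le
    have hmgf_eq : mgf (X i) μ (-lam) = 1 - ∫ ω, (1 - Real.exp (-lam * X i ω)) ∂μ := by
      rw [integral_sub (integrable_const 1) hqint, integral_const]
      simp [mgf]
    calc mgf (X i) μ (-lam) ≤ 1 - c₂ * lam * Real.log L := by rw [hmgf_eq]; linarith
      _ ≤ Real.exp (-(c₂ * lam * Real.log L)) := by
          have := Real.add_one_le_exp (-(c₂ * lam * Real.log L)); linarith
  have hprodbd : ∏ i ∈ Finset.range N, mgf (X i) μ (-lam) ≤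
      Real.exp (-(c₂ * lam * Real.log L)) ^ N :=
    calc ∏ i ∈ Finset.range N, mgf (X i) μ (-lam)
        ≤ ∏ _i ∈ Finset.range N, Real.exp (-(c₂ * lam * Real.log L)) :=
          Finset.prod_le_prod (fun i _ => mgf_nonneg) (fun i _ => hfactor i)
      _ = Real.exp (-(c₂ * lam * Real.log L)) ^ N := by
          rw [Finset.prod_const, Finset.card_range]
  have hfin : Real.exp (-(-lam) * (g * sl * Real.log L)) *
      Real.exp (-(c₂ * lam * Real.log L)) ^ N ≤
      Real.exp ((g * 1 - c₂ * A) * sll) := by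
    rw [← Real.exp_nat_mul, ← Real.exp_add]
    apply Real.exp_le_exp.mpr
    have hNge : A * sl ≤ (N:ℝ) := Nat.le_ceil _
    have heps : -(-lam) * (g * sl * Real.log L) = g * sll := by
      rw [hlam, ← hsll2]; field_simp
    have h1 : c₂ * lam * Real.log L = c₂ * sll / sl := by
      rw [hlam, ← hsll2]; field_simp
    have hterm2 : c₂ * A * sll ≤ (N:ℝ) * (c₂ * lam * Real.log L) := by
      rw [h1]
      have h2 := mul_le_mul_of_nonneg_right hNge (le_of_lt (by positivity : 0 < c₂ * sll / sl))
      calc c₂ * A * sll = A * sl * (c₂ * sll / sl) := by field_simp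
        _ ≤ (N:ℝ) * (c₂ * sll / sl) := h2
    linarith [heps, hterm2]
  have hgoal : {ω | ∑ n ∈ Finset.range N, Real.sqrt ((ξ n ω : ℕ) : ℝ) ≤ g * sl * Real.log L}
      = {ω | S ω ≤ g * sl * Real.log L} := by
    ext ω; simp [hS, hX]
  calc (μ {ω | ∑ n ∈ Finset.range N, Real.sqrt ((ξ n ω : ℕ) : ℝ) ≤ g * sl * Real.log L}).toReal
      = (μ {ω | S ω ≤ g * sl * Real.log L}).toReal := by rw [hgoal]
    _ ≤ Real.exp (-(-lam) * (g * sl * Real.log L)) * mgf S μ (-lam) := chern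
    _ ≤ Real.exp (-(-lam) * (g * sl * Real.log L)) *
        Real.exp (-(c₂ * lam * Real.log L)) ^ N := by
          rw [hmgfsum]
          exact mul_le_mul_of_nonneg_left hprodbd (Real.exp_nonneg _)
    _ ≤ Real.exp ((g * 1 - c₂ * A) * sll) := hfin
end

section
/- Let τ be a recurrent renewal with inter-arrival law K satisfying K(n) ∼ c_K n^{−3/2}, and denote P(b ∈ τ) the probability that b is a renewal point, which satisfies P(n ∈ τ) ∼ 1/(2π c_K √n). Then there is a constant c > 0 such that for every b ≥ 2, E[ √τ_1 √(τ_2 − τ_1) 𝟙_{R_b ≥ 2} | b ∈ τ ] ≤ c (log b)². -/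
open MeasureTheory ProbabilityTheory Filter Finset Real
open scoped Classical

lemma sum_inv_le_log (n : ℕ) : ∑ i ∈ Finset.Icc 1 n, (1:ℝ)/i ≤ 1 + Real.log n := by
  induction n with
  | zero => simp
  | succ n ih =>
    rcases Nat.eq_zero_or_pos n with rfl | hn
    · norm_num
    rw [Finset.sum_Icc_succ_top (by omega)]
    have h0 : (0:ℝ) < n := by exact_mod_cast hn
    have h1 := Real.log_le_sub_one_of_pos (x := (n:ℝ)/(n+1)) (by positivity)
    rw [Real.log_div (by positivity) (by positivity)] at h1
    have h2 : (n:ℝ)/(n+1) - 1 = -(1/(n+1)) := by field_simp; ring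
    push_cast
    push_cast at ih
    linarith

lemma sum_inv_sqrt_le (n : ℕ) :
    ∑ i ∈ Finset.Icc 1 n, (1:ℝ)/Real.sqrt i ≤ 2 * Real.sqrt n := by
  induction n with
  | zero => simp
  | succ n ih =>
    rw [Finset.sum_Icc_succ_top (by omega)]
    have hs : Real.sqrt n ≤ Real.sqrt (n+1) := by
      apply Real.sqrt_le_sqrt; push_cast; linarith
    have hpos : 0 < Real.sqrt ((n:ℝ)+1) := Real.sqrt_pos.mpr (by positivity)
    have h1 : Real.sqrt ((n:ℝ)+1) ^ 2 = (n:ℝ)+1 := Real.sq_sqrt (by positivity)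
    have h2 : Real.sqrt (n:ℝ) ^ 2 = (n:ℝ) := Real.sq_sqrt (by positivity)
    have key : (1:ℝ)/Real.sqrt ((n:ℝ)+1) ≤ 2*Real.sqrt ((n:ℝ)+1) - 2*Real.sqrt (n:ℝ) := by
      rw [div_le_iff₀ hpos]
      nlinarith [sq_nonneg (Real.sqrt ((n:ℝ)+1) - Real.sqrt (n:ℝ))]
    push_cast
    linarith

lemma sqrt_two_le_two : Real.sqrt 2 ≤ 2 := by
  nlinarith [Real.sq_sqrt (by norm_num : (0:ℝ) ≤ 2), Real.sqrt_nonneg 2]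

lemma key_sum (n : ℕ) (hn : 1 ≤ n) :
    ∑ q ∈ Finset.Icc 1 n, (1:ℝ)/((q:ℝ) * Real.sqrt ((n - q + 1 : ℕ) : ℝ))
      ≤ 6*(1+Real.log n)/Real.sqrt n := by
  have hnR : (0:ℝ) < n := by exact_mod_cast hn
  have hsn : 0 < Real.sqrt n := Real.sqrt_pos.mpr hnR
  have hn2 : Real.sqrt (n:ℝ) * Real.sqrt (n:ℝ) = (n:ℝ) :=
    Real.mul_self_sqrt (le_of_lt hnR)
  have hlog : 0 ≤ Real.log n := Real.log_nonneg (by exact_mod_cast hn)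
  set m := n / 2 with hm
  have hsplit : Finset.Icc 1 n = Finset.Ioc 0 m ∪ Finset.Ioc m n := by
    ext x; simp only [Finset.mem_Icc, Finset.mem_Ioc, Finset.mem_union]; omega
  have hdisj : Disjoint (Finset.Ioc 0 m) (Finset.Ioc m n) := by
    simp only [Finset.disjoint_left, Finset.mem_Ioc]; omega
  rw [hsplit, Finset.sum_union hdisj]
  -- part 1
  have p1 : ∑ q ∈ Finset.Ioc 0 m, (1:ℝ)/((q:ℝ) * Real.sqrt ((n - q + 1 : ℕ) : ℝ))
      ≤ (Real.sqrt 2 / Real.sqrt n) * (1 + Real.log n) := by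
    have step : ∀ q ∈ Finset.Ioc 0 m, (1:ℝ)/((q:ℝ) * Real.sqrt ((n - q + 1 : ℕ) : ℝ))
        ≤ (Real.sqrt 2 / Real.sqrt n) * (1/(q:ℝ)) := by
      intro q hq
      simp only [Finset.mem_Ioc] at hq
      have hq1 : (1:ℝ) ≤ (q:ℝ) := by exact_mod_cast hq.1
      have hle : (n:ℝ)/2 ≤ ((n - q + 1 : ℕ) : ℝ) := by
        have h : n ≤ 2*(n - q + 1) := by omega
        have hc : (n:ℝ) ≤ 2*((n - q + 1 : ℕ):ℝ) := by exact_mod_cast h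
        linarith
      have hsq : Real.sqrt ((n:ℝ)/2) ≤ Real.sqrt ((n - q + 1 : ℕ) : ℝ) :=
        Real.sqrt_le_sqrt hle
      have hdiv : Real.sqrt ((n:ℝ)/2) = Real.sqrt n / Real.sqrt 2 :=
        Real.sqrt_div (le_of_lt hnR) 2
      have hsq2 : 0 < Real.sqrt ((n:ℝ)/2) := Real.sqrt_pos.mpr (by positivity)
      have h1 : (1:ℝ)/Real.sqrt ((n - q + 1 : ℕ) : ℝ) ≤ 1/Real.sqrt ((n:ℝ)/2) :=
        one_div_le_one_div_of_le hsq2 hsq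
      have h2 : (1:ℝ)/Real.sqrt ((n:ℝ)/2) = Real.sqrt 2 / Real.sqrt n := by
        rw [hdiv]
        field_simp
      have hq0 : (0:ℝ) < (q:ℝ) := by linarith
      have hnq : (0:ℝ) < Real.sqrt ((n - q + 1 : ℕ) : ℝ) := lt_of_lt_of_le hsq2 hsq
      rw [div_le_iff₀ (by positivity)]
      rw [div_le_iff₀ hnq] at h1
      rw [h2] at h1
      calc (1:ℝ) ≤ Real.sqrt 2 / Real.sqrt n * Real.sqrt ((n - q + 1 : ℕ) : ℝ) := h1
        _ = Real.sqrt 2 / Real.sqrt n * (1/(q:ℝ)) * ((q:ℝ) * Real.sqrt ((n - q + 1 : ℕ) : ℝ)) := by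
            field_simp
    calc ∑ q ∈ Finset.Ioc 0 m, (1:ℝ)/((q:ℝ) * Real.sqrt ((n - q + 1 : ℕ) : ℝ))
        ≤ ∑ q ∈ Finset.Ioc 0 m, (Real.sqrt 2 / Real.sqrt n) * (1/(q:ℝ)) :=
          Finset.sum_le_sum step
      _ = (Real.sqrt 2 / Real.sqrt n) * ∑ q ∈ Finset.Ioc 0 m, (1:ℝ)/(q:ℝ) := by
          rw [Finset.mul_sum]
      _ ≤ (Real.sqrt 2 / Real.sqrt n) * (1 + Real.log n) := by
          apply mul_le_mul_of_nonneg_left _ (by positivity)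
          calc ∑ q ∈ Finset.Ioc 0 m, (1:ℝ)/(q:ℝ)
              ≤ ∑ q ∈ Finset.Icc 1 n, (1:ℝ)/(q:ℝ) := by
                apply Finset.sum_le_sum_of_subset_of_nonneg
                · intro x hx
                  simp only [Finset.mem_Ioc] at hx
                  simp only [Finset.mem_Icc]
                  omega
                · intro i _ _; positivity
            _ ≤ 1 + Real.log n := sum_inv_le_log n
  -- part 2
  have p2 : ∑ q ∈ Finset.Ioc m n, (1:ℝ)/((q:ℝ) * Real.sqrt ((n - q + 1 : ℕ) : ℝ))
      ≤ 4 / Real.sqrt n := by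
    have step : ∀ q ∈ Finset.Ioc m n, (1:ℝ)/((q:ℝ) * Real.sqrt ((n - q + 1 : ℕ) : ℝ))
        ≤ (2/(n:ℝ)) * (1/Real.sqrt ((n - q + 1 : ℕ) : ℝ)) := by
      intro q hq
      simp only [Finset.mem_Ioc] at hq
      have hq0 : (0:ℝ) < (q:ℝ) := by
        have : 0 < q := by omega
        exact_mod_cast this
      have hns : (n:ℝ) ≤ 2*(q:ℝ) := by
        have : n ≤ 2*q := by omega
        exact_mod_cast this
      have hnq : (0:ℝ) < Real.sqrt ((n - q + 1 : ℕ) : ℝ) := by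
        apply Real.sqrt_pos.mpr
        have : (1:ℕ) ≤ n - q + 1 := by omega
        exact_mod_cast this
      rw [div_le_iff₀ (by positivity)]
      have : (2/(n:ℝ)) * (1/Real.sqrt ((n - q + 1 : ℕ) : ℝ)) * ((q:ℝ) * Real.sqrt ((n - q + 1 : ℕ) : ℝ))
          = 2*(q:ℝ)/(n:ℝ) := by field_simp
      calc (1:ℝ) ≤ 2*(q:ℝ)/(n:ℝ) := by rw [le_div_iff₀ hnR]; linarith
        _ = (2/(n:ℝ)) * (1/Real.sqrt ((n - q + 1 : ℕ) : ℝ)) * ((q:ℝ) * Real.sqrt ((n - q + 1 : ℕ) : ℝ)) := this.symm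
    calc ∑ q ∈ Finset.Ioc m n, (1:ℝ)/((q:ℝ) * Real.sqrt ((n - q + 1 : ℕ) : ℝ))
        ≤ ∑ q ∈ Finset.Ioc m n, (2/(n:ℝ)) * (1/Real.sqrt ((n - q + 1 : ℕ) : ℝ)) :=
          Finset.sum_le_sum step
      _ = (2/(n:ℝ)) * ∑ q ∈ Finset.Ioc m n, (1:ℝ)/Real.sqrt ((n - q + 1 : ℕ) : ℝ) := by
          rw [Finset.mul_sum]
      _ ≤ (2/(n:ℝ)) * (2 * Real.sqrt n) := by
          apply mul_le_mul_of_nonneg_left _ (by positivity)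
          have himg : ∑ q ∈ Finset.Ioc m n, (1:ℝ)/Real.sqrt ((n - q + 1 : ℕ) : ℝ)
              = ∑ j ∈ (Finset.Ioc m n).image (fun q => n - q + 1), (1:ℝ)/Real.sqrt (j:ℝ) := by
            rw [Finset.sum_image]
            intro x hx y hy hxy
            simp only [Finset.coe_Ioc, Set.mem_Ioc] at hx hy hxy
            omega
          rw [himg]
          calc ∑ j ∈ (Finset.Ioc m n).image (fun q => n - q + 1), (1:ℝ)/Real.sqrt (j:ℝ)
              ≤ ∑ j ∈ Finset.Icc 1 n, (1:ℝ)/Real.sqrt (j:ℝ) := by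
                apply Finset.sum_le_sum_of_subset_of_nonneg
                · intro x hx
                  simp only [Finset.mem_image, Finset.mem_Ioc] at hx
                  obtain ⟨q, hq, rfl⟩ := hx
                  simp only [Finset.mem_Icc]
                  omega
                · intro i _ _; positivity
            _ ≤ 2 * Real.sqrt n := sum_inv_sqrt_le n
      _ = 4 / Real.sqrt n := by
          rw [eq_div_iff (ne_of_gt hsn)]
          field_simp
          nlinarith [hn2]
  have hfin : (Real.sqrt 2 / Real.sqrt n) * (1 + Real.log n) + 4 / Real.sqrt n
      ≤ 6*(1+Real.log n)/Real.sqrt n := by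
    rw [div_mul_eq_mul_div, ← add_div, div_le_div_iff_of_pos_right hsn]
    nlinarith [sqrt_two_le_two, hlog]
  linarith

lemma double_sum_bound (CK C1 : ℝ) (hCK : 0 ≤ CK) (hC1 : 0 ≤ C1) (K : ℕ → ℝ) (u : ℕ → ℝ)
    (hKn : ∀ n, 0 ≤ K n) (hun : ∀ n, 0 ≤ u n)
    (hCKb : ∀ p : ℕ, 1 ≤ p → Real.sqrt p * K p ≤ CK / p)
    (hC1b : ∀ r : ℕ, u r ≤ C1 / Real.sqrt ((r + 1 : ℕ) : ℝ))
    (b : ℕ) (hb : 2 ≤ b) :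
    ∑ p ∈ Finset.Icc 1 b, ∑ q ∈ Finset.Icc 1 (b - p),
        Real.sqrt p * Real.sqrt q * (K p * (K q * u (b - p - q)))
      ≤ 36 * Real.sqrt 2 * (CK ^ 2 * C1) * (1 + Real.log b) ^ 2 / Real.sqrt b := by
  have hbR : (0:ℝ) < (b:ℝ) := by
    have : 0 < b := by omega
    exact_mod_cast this
  have hlogb : 0 ≤ Real.log b := Real.log_nonneg (by exact_mod_cast Nat.one_le_of_lt hb)
  set D : ℝ := CK ^ 2 * C1 * 6 * (1 + Real.log b) with hD
  have hDpos : 0 ≤ D := by positivity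
  have hinner : ∀ p ∈ Finset.Icc 1 b,
      ∑ q ∈ Finset.Icc 1 (b - p),
          Real.sqrt p * Real.sqrt q * (K p * (K q * u (b - p - q)))
        ≤ D * (1 / ((p : ℝ) * Real.sqrt ((b - p : ℕ) : ℝ))) := by
    intro p hp
    simp only [Finset.mem_Icc] at hp
    rcases Nat.eq_zero_or_pos (b - p) with hbp | hbp
    · rw [hbp]
      simp
    · set n := b - p with hn
      have hpR : (0:ℝ) < (p : ℝ) := by exact_mod_cast hp.1
      have hnR : (0:ℝ) < (n : ℝ) := by exact_mod_cast hbp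
      have hsn : 0 < Real.sqrt (n : ℝ) := Real.sqrt_pos.mpr hnR
      have step1 : ∀ q ∈ Finset.Icc 1 n,
          Real.sqrt p * Real.sqrt q * (K p * (K q * u (n - q)))
            ≤ (CK ^ 2 * C1 / p) * (1 / ((q:ℝ) * Real.sqrt ((n - q + 1 : ℕ) : ℝ))) := by
        intro q hq
        simp only [Finset.mem_Icc] at hq
        have hqR : (0:ℝ) < (q : ℝ) := by exact_mod_cast hq.1
        have t1 : Real.sqrt p * K p ≤ CK / p := hCKb p hp.1
        have t2 : Real.sqrt q * K q ≤ CK / q := hCKb q hq.1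
        have t3 : u (n - q) ≤ C1 / Real.sqrt ((n - q + 1 : ℕ) : ℝ) := hC1b (n - q)
        have hnq : (0:ℝ) < Real.sqrt ((n - q + 1 : ℕ) : ℝ) := by
          apply Real.sqrt_pos.mpr
          have h1 : 0 < n - q + 1 := by omega
          exact_mod_cast h1
        have e1 : Real.sqrt p * Real.sqrt q * (K p * (K q * u (n - q)))
            = (Real.sqrt p * K p) * ((Real.sqrt q * K q) * u (n - q)) := by ring
        have e2 : (CK / p) * ((CK / q) * (C1 / Real.sqrt ((n - q + 1 : ℕ) : ℝ)))
            = (CK ^ 2 * C1 / p) * (1 / ((q:ℝ) * Real.sqrt ((n - q + 1 : ℕ) : ℝ))) := by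
          field_simp
        rw [e1, ← e2]
        have hb1 : (Real.sqrt q * K q) * u (n - q)
            ≤ (CK / q) * (C1 / Real.sqrt ((n - q + 1 : ℕ) : ℝ)) :=
          mul_le_mul t2 t3 (hun _) (by positivity)
        exact mul_le_mul t1 hb1
          (mul_nonneg (mul_nonneg (Real.sqrt_nonneg _) (hKn _)) (hun _)) (by positivity)
      calc ∑ q ∈ Finset.Icc 1 n, Real.sqrt p * Real.sqrt q * (K p * (K q * u (n - q)))
          ≤ ∑ q ∈ Finset.Icc 1 n,
              (CK ^ 2 * C1 / p) * (1 / ((q:ℝ) * Real.sqrt ((n - q + 1 : ℕ) : ℝ))) :=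
            Finset.sum_le_sum step1
        _ = (CK ^ 2 * C1 / p) *
              ∑ q ∈ Finset.Icc 1 n, (1:ℝ) / ((q:ℝ) * Real.sqrt ((n - q + 1 : ℕ) : ℝ)) := by
            rw [Finset.mul_sum]
        _ ≤ (CK ^ 2 * C1 / p) * (6 * (1 + Real.log n) / Real.sqrt n) :=
            mul_le_mul_of_nonneg_left (key_sum n hbp) (by positivity)
        _ ≤ (CK ^ 2 * C1 / p) * (6 * (1 + Real.log b) / Real.sqrt n) := by
            have hlog : Real.log (n : ℝ) ≤ Real.log b := by
              apply Real.log_le_log hnR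
              exact_mod_cast Nat.sub_le b p
            gcongr
        _ = D * (1 / ((p : ℝ) * Real.sqrt (n : ℝ))) := by
            rw [hD]
            field_simp
  have houter : ∑ p ∈ Finset.Icc 1 b, (1:ℝ) / ((p : ℝ) * Real.sqrt ((b - p : ℕ) : ℝ))
      ≤ 6 * (1 + Real.log b) * (Real.sqrt 2 / Real.sqrt b) := by
    have hb1 : 1 ≤ b - 1 := by omega
    have hsb : 0 < Real.sqrt (b:ℝ) := Real.sqrt_pos.mpr hbR
    have hb1R : (0:ℝ) < ((b - 1 : ℕ) : ℝ) := by exact_mod_cast hb1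
    have hsb1 : 0 < Real.sqrt ((b - 1 : ℕ) : ℝ) := Real.sqrt_pos.mpr hb1R
    have hsplit : Finset.Icc 1 b = insert b (Finset.Icc 1 (b - 1)) := by
      ext x; simp only [Finset.mem_Icc, Finset.mem_insert]; omega
    rw [hsplit, Finset.sum_insert (by simp only [Finset.mem_Icc]; omega)]
    have hterm : (1:ℝ) / ((b : ℝ) * Real.sqrt ((b - b : ℕ) : ℝ)) = 0 := by
      rw [Nat.sub_self]
      simp
    rw [hterm, zero_add]
    have hcongr : ∑ p ∈ Finset.Icc 1 (b - 1),
        (1:ℝ) / ((p : ℝ) * Real.sqrt ((b - p : ℕ) : ℝ))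
        = ∑ p ∈ Finset.Icc 1 (b - 1),
            (1:ℝ) / ((p : ℝ) * Real.sqrt (((b - 1) - p + 1 : ℕ) : ℝ)) := by
      apply Finset.sum_congr rfl
      intro p hp
      simp only [Finset.mem_Icc] at hp
      rw [show b - p = (b - 1) - p + 1 by omega]
    rw [hcongr]
    have hks := key_sum (b - 1) hb1
    have hlb : Real.log ((b - 1 : ℕ) : ℝ) ≤ Real.log b := by
      apply Real.log_le_log hb1R
      exact_mod_cast Nat.sub_le b 1
    have hsq : Real.sqrt (b:ℝ) ≤ Real.sqrt 2 * Real.sqrt ((b - 1 : ℕ) : ℝ) := by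
      rw [← Real.sqrt_mul (by norm_num : (0:ℝ) ≤ 2)]
      apply Real.sqrt_le_sqrt
      have h2 : b ≤ 2 * (b - 1) := by omega
      calc (b:ℝ) ≤ ((2 * (b - 1) : ℕ) : ℝ) := by exact_mod_cast h2
        _ = 2 * ((b - 1 : ℕ) : ℝ) := by push_cast; ring
    calc ∑ p ∈ Finset.Icc 1 (b - 1),
          (1:ℝ) / ((p : ℝ) * Real.sqrt (((b - 1) - p + 1 : ℕ) : ℝ))
        ≤ 6 * (1 + Real.log ((b - 1 : ℕ) : ℝ)) / Real.sqrt ((b - 1 : ℕ) : ℝ) := hks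
      _ ≤ 6 * (1 + Real.log b) / Real.sqrt ((b - 1 : ℕ) : ℝ) := by gcongr
      _ ≤ 6 * (1 + Real.log b) * (Real.sqrt 2 / Real.sqrt b) := by
          rw [div_eq_mul_one_div]
          apply mul_le_mul_of_nonneg_left _ (by positivity)
          rw [div_le_div_iff₀ hsb1 hsb]
          linarith
  calc ∑ p ∈ Finset.Icc 1 b, ∑ q ∈ Finset.Icc 1 (b - p),
        Real.sqrt p * Real.sqrt q * (K p * (K q * u (b - p - q)))
      ≤ ∑ p ∈ Finset.Icc 1 b, D * (1 / ((p : ℝ) * Real.sqrt ((b - p : ℕ) : ℝ))) :=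
        Finset.sum_le_sum hinner
    _ = D * ∑ p ∈ Finset.Icc 1 b, (1:ℝ) / ((p : ℝ) * Real.sqrt ((b - p : ℕ) : ℝ)) := by
        rw [Finset.mul_sum]
    _ ≤ D * (6 * (1 + Real.log b) * (Real.sqrt 2 / Real.sqrt b)) :=
        mul_le_mul_of_nonneg_left houter hDpos
    _ = 36 * Real.sqrt 2 * (CK ^ 2 * C1) * (1 + Real.log b) ^ 2 / Real.sqrt b := by
        rw [hD]
        ring

section Renewal

variable {Ω : Type*} [MeasurableSpace Ω] {μ : Measure Ω} [IsProbabilityMeasure μ]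
  {ξ : ℕ → Ω → ℕ} {K : ℕ → ℝ}

/-- The event that `r` is hit by the renewal process started at index `s`. -/
def shiftE (ξ : ℕ → Ω → ℕ) (s r : ℕ) : Set Ω :=
  {ω | ∃ m, ∑ i ∈ Finset.range m, ξ (s + i) ω = r}

lemma shiftE_zero (s : ℕ) : shiftE ξ s 0 = Set.univ := by
  ext ω
  simp only [shiftE, Set.mem_setOf_eq, Set.mem_univ, iff_true]
  exact ⟨0, by simp⟩

lemma shiftE_zero_eq (r : ℕ) : shiftE ξ 0 r = {ω | ∃ n, renewalEpoch ξ n ω = r} := by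
  ext ω; simp [shiftE, renewalEpoch]

lemma sum_gap (s m : ℕ) (ω : Ω) :
    ∑ i ∈ Finset.range (m + 1), ξ (s + i) ω
      = ξ s ω + ∑ i ∈ Finset.range m, ξ ((s + 1) + i) ω := by
  rw [Finset.sum_range_succ']
  simp only [Nat.add_zero]
  rw [add_comm]
  congr 1
  apply Finset.sum_congr rfl
  intro i _
  congr 1
  omega

lemma measurableSet_shiftE (hmeas : ∀ i, Measurable (ξ i)) (s r : ℕ) :
    MeasurableSet (shiftE ξ s r) := by
  have h : shiftE ξ s r = ⋃ m, (fun ω => ∑ i ∈ Finset.range m, ξ (s + i) ω) ⁻¹' {r} := by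
    ext ω; simp [shiftE]
  rw [h]
  exact MeasurableSet.iUnion fun m =>
    (Finset.measurable_sum _ fun i _ => hmeas (s + i)) (measurableSet_singleton r)

lemma measurableSet_event (hmeas : ∀ i, Measurable (ξ i)) (r : ℕ) :
    MeasurableSet {ω : Ω | ∃ n, renewalEpoch ξ n ω = r} := by
  rw [← shiftE_zero_eq]; exact measurableSet_shiftE hmeas 0 r

lemma shiftE_measurable_sup (hmeas : ∀ i, Measurable (ξ i)) (s r : ℕ) :
    MeasurableSet[⨆ i ∈ {i : ℕ | s < i}, MeasurableSpace.comap (ξ i) ⊤] (shiftE ξ (s + 1) r) := by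
  set M := ⨆ i ∈ {i : ℕ | s < i}, MeasurableSpace.comap (ξ i) ⊤ with hM
  have hmeasM : ∀ j, s < j → Measurable[M] (ξ j) := by
    intro j hj
    rw [measurable_iff_comap_le]
    exact le_biSup (fun i => MeasurableSpace.comap (ξ i) ⊤) hj
  have h : shiftE ξ (s + 1) r
      = ⋃ m, (fun ω => ∑ i ∈ Finset.range m, ξ ((s + 1) + i) ω) ⁻¹' {r} := by
    ext ω; simp [shiftE]
  rw [h]
  exact MeasurableSet.iUnion fun m =>
    (Finset.measurable_sum (m := M) _ fun i _ => hmeasM ((s + 1) + i) (by omega))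
      (measurableSet_singleton r)

lemma meas_inter_indep (hmeas : ∀ i, Measurable (ξ i))
    (hindep : iIndepFun ξ μ) (s p : ℕ) {B : Set Ω}
    (hB : MeasurableSet[⨆ i ∈ {i : ℕ | s < i}, MeasurableSpace.comap (ξ i) ⊤] B) :
    μ ({ω | ξ s ω = p} ∩ B) = μ {ω | ξ s ω = p} * μ B := by
  have h_le : ∀ n, MeasurableSpace.comap (ξ n) ⊤ ≤ _ := fun n =>
    measurable_iff_comap_le.mp (hmeas n)
  have hind := indep_biSup_compl h_le hindep.iIndep {s}
  rw [Indep_iff] at hind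
  apply hind
  · have h1 : MeasurableSet[MeasurableSpace.comap (ξ s) ⊤] {ω | ξ s ω = p} :=
      ⟨{p}, MeasurableSpace.measurableSet_top, by ext ω; simp⟩
    exact le_biSup (fun i => MeasurableSpace.comap (ξ i) ⊤) (Set.mem_singleton s) _ h1
  · have hmono : (⨆ i ∈ {i : ℕ | s < i}, MeasurableSpace.comap (ξ i) ⊤)
        ≤ ⨆ i ∈ ({s}ᶜ : Set ℕ), MeasurableSpace.comap (ξ i) ⊤ := by
      apply biSup_mono
      intro i hi
      simp only [Set.mem_compl_iff, Set.mem_singleton_iff]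
      simp only [Set.mem_setOf_eq] at hi
      omega
    exact hmono _ hB


lemma measure_gap_zero (hdist : ∀ i n, (μ {ω | ξ i ω = n}).toReal = K n)
    (hK0 : K 0 = 0) (s : ℕ) : μ {ω | ξ s ω = 0} = 0 := by
  have h := hdist s 0
  rw [hK0] at h
  exact ((ENNReal.toReal_eq_zero_iff _).mp h).resolve_right (measure_ne_top μ _)

lemma measure_gap_eq (hdist : ∀ i n, (μ {ω | ξ i ω = n}).toReal = K n) (s t p : ℕ) :
    μ {ω | ξ s ω = p} = μ {ω | ξ t ω = p} :=
  (ENNReal.toReal_eq_toReal_iff' (measure_ne_top μ _) (measure_ne_top μ _)).mp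
    (by rw [hdist, hdist])

lemma measure_shiftE_succ (hmeas : ∀ i, Measurable (ξ i))
    (hindep : iIndepFun ξ μ)
    (hdist : ∀ i n, (μ {ω | ξ i ω = n}).toReal = K n) (hK0 : K 0 = 0)
    (s r : ℕ) (hr : 1 ≤ r) :
    μ (shiftE ξ s r)
      = ∑ p ∈ Finset.Icc 1 r, μ {ω | ξ s ω = p} * μ (shiftE ξ (s + 1) (r - p)) := by
  have hdecomp : shiftE ξ s r
      = ⋃ p ∈ Finset.Icc 0 r, ({ω | ξ s ω = p} ∩ shiftE ξ (s + 1) (r - p)) := by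
    ext ω
    simp only [shiftE, Set.mem_setOf_eq, Set.mem_iUnion, Finset.mem_Icc, Set.mem_inter_iff]
    constructor
    · rintro ⟨m, hm⟩
      have hm0 : m ≠ 0 := by
        rintro rfl
        simp only [Finset.range_zero, Finset.sum_empty] at hm
        omega
      obtain ⟨m', rfl⟩ := Nat.exists_eq_succ_of_ne_zero hm0
      rw [sum_gap] at hm
      exact ⟨ξ s ω, ⟨⟨Nat.zero_le _, by omega⟩, rfl, m', by omega⟩⟩
    · rintro ⟨p, hp, hps, m, hm⟩
      refine ⟨m + 1, ?_⟩
      rw [sum_gap, hps, hm]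
      omega
  have hmeasint : ∀ p : ℕ, MeasurableSet ({ω | ξ s ω = p} ∩ shiftE ξ (s + 1) (r - p)) :=
    fun p => (((hmeas s) (measurableSet_singleton p)).inter
      (measurableSet_shiftE hmeas (s + 1) (r - p)))
  have hdisj : (Finset.Icc 0 r : Set ℕ).PairwiseDisjoint
      (fun p => {ω | ξ s ω = p} ∩ shiftE ξ (s + 1) (r - p)) := by
    intro a _ b _ hab
    apply Set.disjoint_left.mpr
    rintro ω ⟨ha, -⟩ ⟨hb, -⟩
    exact hab (ha.symm.trans hb)
  rw [hdecomp, measure_biUnion_finset hdisj (fun p _ => hmeasint p)]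
  have hprod : ∀ p ∈ Finset.Icc 0 r,
      μ ({ω | ξ s ω = p} ∩ shiftE ξ (s + 1) (r - p))
        = μ {ω | ξ s ω = p} * μ (shiftE ξ (s + 1) (r - p)) := fun p _ =>
    meas_inter_indep hmeas hindep s p (shiftE_measurable_sup hmeas s (r - p))
  rw [Finset.sum_congr rfl hprod]
  rw [show Finset.Icc 0 r = insert 0 (Finset.Icc 1 r) by ext x; simp; omega,
    Finset.sum_insert (by simp)]
  rw [measure_gap_zero hdist hK0 s, zero_mul, zero_add]

lemma measure_shiftE_shift (hmeas : ∀ i, Measurable (ξ i))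
    (hindep : iIndepFun ξ μ)
    (hdist : ∀ i n, (μ {ω | ξ i ω = n}).toReal = K n) (hK0 : K 0 = 0) (r : ℕ) :
    ∀ s, μ (shiftE ξ s r) = μ (shiftE ξ 0 r) := by
  induction r using Nat.strong_induction_on with
  | _ r ih =>
    intro s
    rcases Nat.eq_zero_or_pos r with rfl | hr
    · rw [shiftE_zero, shiftE_zero]
    rw [measure_shiftE_succ hmeas hindep hdist hK0 s r hr,
      measure_shiftE_succ hmeas hindep hdist hK0 0 r hr]
    apply Finset.sum_congr rfl
    intro p hp
    simp only [Finset.mem_Icc] at hp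
    rw [measure_gap_eq hdist s 0 p, ih (r - p) (by omega) (s + 1), ih (r - p) (by omega) 1]

lemma measure_two_gaps (hmeas : ∀ i, Measurable (ξ i))
    (hindep : iIndepFun ξ μ)
    (hdist : ∀ i n, (μ {ω | ξ i ω = n}).toReal = K n) (hK0 : K 0 = 0)
    (p q b : ℕ) (hp : 1 ≤ p) (hq : 1 ≤ q) (hpq : p + q ≤ b) :
    μ ({ω | ξ 0 ω = p ∧ ξ 1 ω = q} ∩ shiftE ξ 0 b)
      = μ {ω | ξ 0 ω = p} * (μ {ω | ξ 1 ω = q} * μ (shiftE ξ 0 (b - p - q))) := by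
  have hset : {ω | ξ 0 ω = p ∧ ξ 1 ω = q} ∩ shiftE ξ 0 b
      = {ω | ξ 0 ω = p} ∩ ({ω | ξ 1 ω = q} ∩ shiftE ξ 2 (b - p - q)) := by
    ext ω
    simp only [shiftE, Set.mem_setOf_eq, Set.mem_inter_iff]
    have ekey : ∀ m' : ℕ, ∑ i ∈ Finset.range (m' + 2), ξ (0 + i) ω
        = ξ 0 ω + ξ 1 ω + ∑ i ∈ Finset.range m', ξ (2 + i) ω := by
      intro m'
      have e1 := sum_gap (ξ := ξ) 0 (m' + 1) ω
      have e2 := sum_gap (ξ := ξ) 1 m' ω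
      norm_num at e1 e2 ⊢
      rw [show m' + 2 = m' + 1 + 1 by omega] at *
      omega
    constructor
    · rintro ⟨⟨h0, h1⟩, m, hm⟩
      have hm2 : 2 ≤ m := by
        by_contra hc
        interval_cases m <;> simp_all [Finset.sum_range_one] <;> omega
      obtain ⟨m', rfl⟩ : ∃ m', m = m' + 2 := ⟨m - 2, by omega⟩
      have := ekey m'
      exact ⟨h0, h1, m', by omega⟩
    · rintro ⟨h0, h1, m, hm⟩
      refine ⟨⟨h0, h1⟩, m + 2, ?_⟩
      have := ekey m
      omega
  have hB2 : MeasurableSet[⨆ i ∈ {i : ℕ | 1 < i}, MeasurableSpace.comap (ξ i) ⊤]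
      (shiftE ξ 2 (b - p - q)) := shiftE_measurable_sup hmeas 1 (b - p - q)
  have hB1 : MeasurableSet[⨆ i ∈ {i : ℕ | 0 < i}, MeasurableSpace.comap (ξ i) ⊤]
      ({ω | ξ 1 ω = q} ∩ shiftE ξ 2 (b - p - q)) := by
    apply MeasurableSet.inter
    · have h1 : MeasurableSet[MeasurableSpace.comap (ξ 1) ⊤] {ω | ξ 1 ω = q} :=
        ⟨{q}, MeasurableSpace.measurableSet_top, by ext ω; simp⟩
      exact le_biSup (fun i => MeasurableSpace.comap (ξ i) ⊤)
        (show (0:ℕ) < 1 by omega) _ h1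
    · have hmono : (⨆ i ∈ {i : ℕ | 1 < i}, MeasurableSpace.comap (ξ i) ⊤)
          ≤ ⨆ i ∈ {i : ℕ | 0 < i}, MeasurableSpace.comap (ξ i) ⊤ := by
        apply biSup_mono
        intro i hi
        simp only [Set.mem_setOf_eq] at *
        omega
      exact hmono _ hB2
  rw [hset, meas_inter_indep hmeas hindep 0 p hB1,
    meas_inter_indep hmeas hindep 1 q hB2,
    measure_shiftE_shift hmeas hindep hdist hK0 (b - p - q) 2]


lemma measurable_renewalCount (hmeas : ∀ i, Measurable (ξ i)) (b : ℕ) :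
    Measurable (renewalCount ξ b) := by
  have h : renewalCount ξ b = fun ω =>
      ∑ k ∈ Finset.Icc 1 b, (if ω ∈ {ω : Ω | ∃ n, renewalEpoch ξ n ω = k} then 1 else 0) := by
    ext ω
    rw [renewalCount, Finset.card_filter]
    rfl
  rw [h]
  apply Finset.measurable_sum
  intro k _
  exact Measurable.ite (measurableSet_event hmeas k) measurable_const measurable_const

lemma ae_one_le_gap (hdist : ∀ i n, (μ {ω | ξ i ω = n}).toReal = K n) (hK0 : K 0 = 0) :
    ∀ᵐ ω ∂μ, ∀ i, 1 ≤ ξ i ω := by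
  rw [ae_all_iff]
  intro i
  have h0 : μ {ω | ξ i ω = 0} = 0 := measure_gap_zero hdist hK0 i
  have heq : {ω : Ω | ¬ 1 ≤ ξ i ω} = {ω : Ω | ξ i ω = 0} := by
    ext ω
    simp only [Set.mem_setOf_eq, not_le, Nat.lt_one_iff]
  rw [ae_iff, heq]
  exact h0

lemma gap_sum_le_of_count {ω : Ω} (h : ∀ i, 1 ≤ ξ i ω) {b : ℕ}
    (hR : 2 ≤ renewalCount ξ b ω) : ξ 0 ω + ξ 1 ω ≤ b := by
  have hmono : StrictMono (fun n => renewalEpoch ξ n ω) := by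
    apply strictMono_nat_of_lt_succ
    intro n
    simp only [renewalEpoch, Finset.sum_range_succ]
    have := h n
    omega
  rw [renewalCount] at hR
  have hcard : 1 < ((Finset.Icc 1 b).filter (fun k => ∃ n, renewalEpoch ξ n ω = k)).card := by
    omega
  obtain ⟨k1, hk1, k2, hk2, hne⟩ := Finset.one_lt_card.mp hcard
  simp only [Finset.mem_filter, Finset.mem_Icc] at hk1 hk2
  obtain ⟨⟨hk1a, hk1b⟩, n1, hn1⟩ := hk1
  obtain ⟨⟨hk2a, hk2b⟩, n2, hn2⟩ := hk2
  have hepoch0 : renewalEpoch ξ 0 ω = 0 := by simp [renewalEpoch]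
  have hepoch2 : renewalEpoch ξ 2 ω = ξ 0 ω + ξ 1 ω := by
    simp [renewalEpoch, Finset.sum_range_succ]
  have hn1pos : 1 ≤ n1 := by
    by_contra hc
    have : n1 = 0 := by omega
    subst this
    omega
  have hn2pos : 1 ≤ n2 := by
    by_contra hc
    have : n2 = 0 := by omega
    subst this
    omega
  have hnne : n1 ≠ n2 := by rintro rfl; exact hne (hn1.symm.trans hn2)
  rcases Nat.lt_or_ge n1 n2 with hlt | hge
  · have h2 : 2 ≤ n2 := by omega
    have := hmono.monotone h2
    rw [hepoch2] at this
    omega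
  · have h2 : 2 ≤ n1 := by omega
    have := hmono.monotone h2
    rw [hepoch2] at this
    omega


lemma f_ae_bound (hdist : ∀ i n, (μ {ω | ξ i ω = n}).toReal = K n) (hK0 : K 0 = 0) (b : ℕ) :
    ∀ᵐ ω ∂μ, ‖Real.sqrt (ξ 0 ω) * Real.sqrt (ξ 1 ω)
      * (if 2 ≤ renewalCount ξ b ω then (1 : ℝ) else 0)‖ ≤ (b : ℝ) := by
  filter_upwards [ae_one_le_gap hdist hK0] with ω hω
  have hnn : 0 ≤ Real.sqrt (ξ 0 ω) * Real.sqrt (ξ 1 ω)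
      * (if 2 ≤ renewalCount ξ b ω then (1 : ℝ) else 0) := by positivity
  rw [Real.norm_of_nonneg hnn]
  by_cases hR : 2 ≤ renewalCount ξ b ω
  · have hsum := gap_sum_le_of_count hω hR
    rw [if_pos hR, mul_one]
    have h0 : Real.sqrt (ξ 0 ω) ^ 2 = (ξ 0 ω : ℝ) := Real.sq_sqrt (by positivity)
    have h1 : Real.sqrt (ξ 1 ω) ^ 2 = (ξ 1 ω : ℝ) := Real.sq_sqrt (by positivity)
    have hcast : (ξ 0 ω : ℝ) + (ξ 1 ω : ℝ) ≤ (b : ℝ) := by exact_mod_cast hsum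
    nlinarith [sq_nonneg (Real.sqrt (ξ 0 ω) - Real.sqrt (ξ 1 ω))]
  · rw [if_neg hR, mul_zero]
    positivity

lemma cond_integral_le_sum (hmeas : ∀ i, Measurable (ξ i))
    (hindep : iIndepFun ξ μ)
    (hdist : ∀ i n, (μ {ω | ξ i ω = n}).toReal = K n) (hK0 : K 0 = 0)
    (b : ℕ) (hb : 2 ≤ b) :
    (∫ ω, Real.sqrt (ξ 0 ω) * Real.sqrt (ξ 1 ω)
        * (if 2 ≤ renewalCount ξ b ω then (1 : ℝ) else 0)
      ∂(μ[|{ω | ∃ n, renewalEpoch ξ n ω = b}]))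
    ≤ ((μ (shiftE ξ 0 b)).toReal)⁻¹ *
      ∑ p ∈ Finset.Icc 1 b, ∑ q ∈ Finset.Icc 1 (b - p),
        Real.sqrt p * Real.sqrt q * (K p * (K q * (μ (shiftE ξ 0 (b - p - q))).toReal)) := by
  set A := shiftE ξ 0 b with hA
  have hAmeas : MeasurableSet A := measurableSet_shiftE hmeas 0 b
  set f : Ω → ℝ := fun ω => Real.sqrt (ξ 0 ω) * Real.sqrt (ξ 1 ω)
      * (if 2 ≤ renewalCount ξ b ω then (1 : ℝ) else 0) with hf
  have hmf : Measurable f := by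
    have h0 : Measurable fun ω => Real.sqrt (ξ 0 ω) :=
      (measurable_from_top (f := fun n : ℕ => Real.sqrt n)).comp (hmeas 0)
    have h1 : Measurable fun ω => Real.sqrt (ξ 1 ω) :=
      (measurable_from_top (f := fun n : ℕ => Real.sqrt n)).comp (hmeas 1)
    have h2 : Measurable fun ω => (if 2 ≤ renewalCount ξ b ω then (1 : ℝ) else 0) :=
      Measurable.ite (measurableSet_le measurable_const (measurable_renewalCount hmeas b))
        measurable_const measurable_const
    exact (h0.mul h1).mul h2
  have hfnonneg : ∀ ω, 0 ≤ f ω := by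
    intro ω
    simp only [hf]
    positivity
  have hSmeas : ∀ p q : ℕ, MeasurableSet {ω : Ω | ξ 0 ω = p ∧ ξ 1 ω = q} := by
    intro p q
    exact ((hmeas 0) (measurableSet_singleton p)).inter ((hmeas 1) (measurableSet_singleton q))
  set g : Ω → ℝ := fun ω => ∑ p ∈ Finset.Icc 1 b, ∑ q ∈ Finset.Icc 1 (b - p),
      Set.indicator {ω : Ω | ξ 0 ω = p ∧ ξ 1 ω = q}
        (fun _ => Real.sqrt p * Real.sqrt q) ω with hg
  have hfae : ∀ᵐ ω ∂μ, ‖f ω‖ ≤ (b : ℝ) := f_ae_bound hdist hK0 b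
  have hfg : f ≤ᵐ[μ.restrict A] g := by
    apply ae_restrict_of_ae
    filter_upwards [ae_one_le_gap hdist hK0] with ω hω
    simp only [hf, hg]
    by_cases hR : 2 ≤ renewalCount ξ b ω
    · have hsum := gap_sum_le_of_count hω hR
      rw [if_pos hR, mul_one]
      have hp0 : 1 ≤ ξ 0 ω := hω 0
      have hq0 : 1 ≤ ξ 1 ω := hω 1
      have hterm : Set.indicator {ω' : Ω | ξ 0 ω' = ξ 0 ω ∧ ξ 1 ω' = ξ 1 ω}
          (fun _ => Real.sqrt (ξ 0 ω) * Real.sqrt (ξ 1 ω)) ω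
            = Real.sqrt (ξ 0 ω) * Real.sqrt (ξ 1 ω) :=
        Set.indicator_of_mem
          (show ω ∈ {ω' : Ω | ξ 0 ω' = ξ 0 ω ∧ ξ 1 ω' = ξ 1 ω} from ⟨rfl, rfl⟩) _
      calc Real.sqrt (ξ 0 ω) * Real.sqrt (ξ 1 ω)
          = Set.indicator {ω' : Ω | ξ 0 ω' = ξ 0 ω ∧ ξ 1 ω' = ξ 1 ω}
              (fun _ => Real.sqrt (ξ 0 ω) * Real.sqrt (ξ 1 ω)) ω := hterm.symm
        _ ≤ ∑ q ∈ Finset.Icc 1 (b - ξ 0 ω),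
              Set.indicator {ω' : Ω | ξ 0 ω' = ξ 0 ω ∧ ξ 1 ω' = q}
                (fun _ => Real.sqrt (ξ 0 ω) * Real.sqrt q) ω := by
            apply Finset.single_le_sum
              (f := fun q => Set.indicator {ω' : Ω | ξ 0 ω' = ξ 0 ω ∧ ξ 1 ω' = q}
                (fun _ => Real.sqrt (ξ 0 ω) * Real.sqrt q) ω)
            · intro q _
              apply Set.indicator_nonneg
              intro a _
              positivity
            · simp only [Finset.mem_Icc]
              omega
        _ ≤ ∑ p ∈ Finset.Icc 1 b, ∑ q ∈ Finset.Icc 1 (b - p),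
              Set.indicator {ω' : Ω | ξ 0 ω' = p ∧ ξ 1 ω' = q}
                (fun _ => Real.sqrt p * Real.sqrt q) ω := by
            apply Finset.single_le_sum
              (f := fun p => ∑ q ∈ Finset.Icc 1 (b - p),
                Set.indicator {ω' : Ω | ξ 0 ω' = p ∧ ξ 1 ω' = q}
                  (fun _ => Real.sqrt p * Real.sqrt q) ω)
            · intro p _
              apply Finset.sum_nonneg
              intro q _
              apply Set.indicator_nonneg
              intro a _
              positivity
            · simp only [Finset.mem_Icc]
              omega
    · rw [if_neg hR, mul_zero]
      apply Finset.sum_nonneg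
      intro p _
      apply Finset.sum_nonneg
      intro q _
      apply Set.indicator_nonneg
      intro a _
      positivity
  have hfint : Integrable f (μ.restrict A) :=
    Integrable.mono' (integrable_const (b : ℝ)) hmf.aestronglyMeasurable
      (ae_restrict_of_ae hfae)
  have hgint : Integrable g (μ.restrict A) := by
    apply integrable_finset_sum
    intro p _
    apply integrable_finset_sum
    intro q _
    exact (integrable_const _).indicator (hSmeas p q)
  have hcondeq : {ω : Ω | ∃ n, renewalEpoch ξ n ω = b} = A := by
    rw [hA, shiftE_zero_eq]
  rw [hcondeq]
  have hcond : μ[|A] = (μ A)⁻¹ • μ.restrict A := rfl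
  rw [hcond, integral_smul_measure]
  rw [ENNReal.toReal_inv]
  rw [smul_eq_mul]
  apply mul_le_mul_of_nonneg_left _ (by positivity)
  calc ∫ ω, f ω ∂(μ.restrict A) ≤ ∫ ω, g ω ∂(μ.restrict A) :=
        integral_mono_ae hfint hgint hfg
    _ = ∑ p ∈ Finset.Icc 1 b, ∑ q ∈ Finset.Icc 1 (b - p),
          Real.sqrt p * Real.sqrt q * (K p * (K q * (μ (shiftE ξ 0 (b - p - q))).toReal)) := by
        rw [integral_finset_sum _ (fun p _ => integrable_finset_sum _
          (fun q _ => (integrable_const _).indicator (hSmeas p q)))]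
        apply Finset.sum_congr rfl
        intro p hp
        rw [integral_finset_sum _ (fun q _ => (integrable_const _).indicator (hSmeas p q))]
        apply Finset.sum_congr rfl
        intro q hq
        simp only [Finset.mem_Icc] at hp hq
        rw [integral_indicator_const _ (hSmeas p q), measureReal_def, Measure.restrict_apply (hSmeas p q)]
        rw [measure_two_gaps hmeas hindep hdist hK0 p q b hp.1 hq.1 (by omega)]
        rw [ENNReal.toReal_mul, ENNReal.toReal_mul, hdist 0 p, hdist 1 q]
        rw [smul_eq_mul]
        ring

end Renewal

lemma exists_forall_le_of_tendsto {f : ℕ → ℝ} {L : ℝ} (h : Tendsto f atTop (nhds L)) :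
    ∃ C : ℝ, ∀ n, f n ≤ C := by
  obtain ⟨C, hC⟩ := h.bddAbove_range
  exact ⟨C, fun n => hC (Set.mem_range_self n)⟩

lemma eventually_half_le_of_tendsto {f : ℕ → ℝ} {L : ℝ} (hL : 0 < L)
    (h : Tendsto f atTop (nhds L)) : ∃ N : ℕ, ∀ n ≥ N, L / 2 ≤ f n := by
  have := h.eventually (eventually_ge_nhds (show L / 2 < L by linarith))
  exact eventually_atTop.mp this


set_option maxHeartbeats 1000000 in
/-- For a recurrent renewal with inter-arrival law `K(n) ∼ c_K n^{−3/2}` and renewal mass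
function satisfying `P(n ∈ τ) ∼ 1/(2π c_K √n)`, there is `c > 0` such that for all `b ≥ 2`,
`E[√τ₁ √(τ₂−τ₁) 𝟙_{R_b≥2} | b ∈ τ] ≤ c (log b)²`. -/
theorem conditional_expectation_sqrt_gaps_le {Ω : Type*} [MeasurableSpace Ω] (μ : Measure Ω)
    [IsProbabilityMeasure μ] (ξ : ℕ → Ω → ℕ) (K : ℕ → ℝ) (cK : ℝ) (hcK : 0 < cK)
    (hmeas : ∀ i, Measurable (ξ i))
    (hindep : iIndepFun ξ μ)
    (hdist : ∀ i n, (μ {ω | ξ i ω = n}).toReal = K n)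
    (hK0 : K 0 = 0)
    (hKasymp : Tendsto (fun n : ℕ => K n * (n : ℝ) ^ ((3 : ℝ) / 2)) atTop (nhds cK))
    (hRenAsymp :
      Tendsto (fun n : ℕ => (μ {ω | ∃ m, renewalEpoch ξ m ω = n}).toReal * Real.sqrt n)
        atTop (nhds (1 / (2 * π * cK)))) :
    ∃ c : ℝ, 0 < c ∧ ∀ b : ℕ, 2 ≤ b →
      (∫ ω, Real.sqrt (ξ 0 ω) * Real.sqrt (ξ 1 ω)
            * (if 2 ≤ renewalCount ξ b ω then (1 : ℝ) else 0)
          ∂(μ[|{ω | ∃ n, renewalEpoch ξ n ω = b}]))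
        ≤ c * (Real.log b) ^ 2 := by
  have hπ : 0 < π := Real.pi_pos
  set L : ℝ := 1 / (2 * π * cK) with hLdef
  have hLpos : 0 < L := by positivity
  set u : ℕ → ℝ := fun r => (μ (shiftE ξ 0 r)).toReal with hu
  have hRen : Tendsto (fun n : ℕ => u n * Real.sqrt n) atTop (nhds L) := by
    have heq : (fun n : ℕ => u n * Real.sqrt n)
        = fun n : ℕ => (μ {ω | ∃ m, renewalEpoch ξ m ω = n}).toReal * Real.sqrt n := by
      funext n
      rw [hu]
      simp only
      rw [shiftE_zero_eq]
    rw [heq]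
    exact hRenAsymp
  have hKnonneg : ∀ n, 0 ≤ K n := fun n => (hdist 0 n) ▸ ENNReal.toReal_nonneg
  have hun : ∀ r, 0 ≤ u r := fun r => ENNReal.toReal_nonneg
  have hu1 : ∀ r, u r ≤ 1 := by
    intro r
    rw [hu]
    simp only
    calc (μ (shiftE ξ 0 r)).toReal ≤ (μ Set.univ).toReal :=
          ENNReal.toReal_mono (measure_ne_top μ _) (measure_mono (Set.subset_univ _))
      _ = 1 := by simp
  obtain ⟨CK0, hCK0⟩ := exists_forall_le_of_tendsto hKasymp
  set CK : ℝ := max CK0 1 with hCKdef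
  have hCKpos : (0:ℝ) < CK := lt_of_lt_of_le one_pos (le_max_right _ _)
  have hCKb : ∀ p : ℕ, 1 ≤ p → Real.sqrt p * K p ≤ CK / p := by
    intro p hp
    have hpR : (0:ℝ) < p := by exact_mod_cast hp
    have hid : (p:ℝ) ^ ((3:ℝ)/2) = p * Real.sqrt p := by
      rw [show ((3:ℝ)/2) = 1 + 1/2 by norm_num, Real.rpow_add hpR, Real.rpow_one,
        Real.sqrt_eq_rpow]
    rw [le_div_iff₀ hpR]
    calc Real.sqrt p * K p * p = K p * ((p:ℝ) ^ ((3:ℝ)/2)) := by rw [hid]; ring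
      _ ≤ CK0 := hCK0 p
      _ ≤ CK := le_max_left _ _
  obtain ⟨M0, hM0⟩ := exists_forall_le_of_tendsto hRen
  set C1 : ℝ := Real.sqrt 2 * max M0 1 with hC1def
  have hsqrt2pos : (0:ℝ) < Real.sqrt 2 := Real.sqrt_pos.mpr (by norm_num)
  have hone_le_sqrt2 : (1:ℝ) ≤ Real.sqrt 2 := by
    rw [show (1:ℝ) = Real.sqrt 1 by simp]
    exact Real.sqrt_le_sqrt (by norm_num)
  have hC1pos : (0:ℝ) < C1 :=
    mul_pos hsqrt2pos (lt_of_lt_of_le one_pos (le_max_right _ _))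
  have hC1b : ∀ r : ℕ, u r ≤ C1 / Real.sqrt ((r + 1 : ℕ) : ℝ) := by
    intro r
    rcases Nat.eq_zero_or_pos r with rfl | hr
    · have h01 : ((0 + 1 : ℕ) : ℝ) = 1 := by norm_num
      rw [h01, Real.sqrt_one, div_one]
      calc u 0 ≤ 1 := hu1 0
        _ ≤ C1 := by
            calc (1:ℝ) = 1 * 1 := by ring
              _ ≤ Real.sqrt 2 * max M0 1 :=
                  mul_le_mul hone_le_sqrt2 (le_max_right _ _) one_pos.le hsqrt2pos.le
    · have hrR : (0:ℝ) < r := by exact_mod_cast hr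
      have hsr : 0 < Real.sqrt (r:ℝ) := Real.sqrt_pos.mpr hrR
      have h1 : u r * Real.sqrt r ≤ max M0 1 := le_trans (hM0 r) (le_max_left _ _)
      have h2 : u r ≤ max M0 1 / Real.sqrt r := by
        rw [le_div_iff₀ hsr]
        exact h1
      have h3 : Real.sqrt ((r + 1 : ℕ) : ℝ) ≤ Real.sqrt 2 * Real.sqrt (r:ℝ) := by
        rw [← Real.sqrt_mul (by norm_num : (0:ℝ) ≤ 2)]
        apply Real.sqrt_le_sqrt
        have h4 : r + 1 ≤ 2 * r := by omega
        calc ((r + 1 : ℕ) : ℝ) ≤ ((2 * r : ℕ) : ℝ) := by exact_mod_cast h4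
          _ = 2 * (r : ℝ) := by push_cast; ring
      have hpos1 : 0 < Real.sqrt ((r + 1 : ℕ) : ℝ) := by
        apply Real.sqrt_pos.mpr
        have : 0 < r + 1 := by omega
        exact_mod_cast this
      calc u r ≤ max M0 1 / Real.sqrt r := h2
        _ = C1 / (Real.sqrt 2 * Real.sqrt (r:ℝ)) := by
            rw [hC1def]
            exact (mul_div_mul_left _ _ (ne_of_gt hsqrt2pos)).symm
        _ ≤ C1 / Real.sqrt ((r + 1 : ℕ) : ℝ) :=
            div_le_div_of_nonneg_left hC1pos.le hpos1 h3
  obtain ⟨N0, hN0⟩ := eventually_half_le_of_tendsto hLpos hRen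
  have hlog2 : (0:ℝ) < Real.log 2 := Real.log_pos (by norm_num)
  set c1 : ℝ := (2 / L) * (36 * Real.sqrt 2 * (CK ^ 2 * C1)) * (1 + 1 / Real.log 2) ^ 2
    with hc1
  set c2 : ℝ := ((N0 : ℝ) + 2) / (Real.log 2) ^ 2 with hc2
  have hc1pos : 0 ≤ c1 := by positivity
  have hc2pos : 0 ≤ c2 := by positivity
  have hcpos : 0 < max c1 c2 + 1 := by
    have := le_trans hc1pos (le_max_left c1 c2)
    linarith
  refine ⟨max c1 c2 + 1, hcpos, ?_⟩
  intro b hb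
  have hb0R : (0:ℝ) < b := by
    have : 0 < b := by omega
    exact_mod_cast this
  have hsb : 0 < Real.sqrt (b:ℝ) := Real.sqrt_pos.mpr hb0R
  have hlogb2 : Real.log 2 ≤ Real.log b := Real.log_le_log (by norm_num) (by exact_mod_cast hb)
  have hlogbpos : 0 < Real.log b := lt_of_lt_of_le hlog2 hlogb2
  have hsq_log : (Real.log 2)^2 ≤ (Real.log b)^2 := pow_le_pow_left₀ hlog2.le hlogb2 2
  set S : Set Ω := {ω : Ω | ∃ n, renewalEpoch ξ n ω = b} with hS
  have hSA : S = shiftE ξ 0 b := by rw [hS, shiftE_zero_eq]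
  by_cases hμ : μ (shiftE ξ 0 b) = 0
  · have hzero : μ[|S] = 0 := by
      rw [hSA]
      have hcond : μ[|shiftE ξ 0 b]
          = (μ (shiftE ξ 0 b))⁻¹ • μ.restrict (shiftE ξ 0 b) := rfl
      rw [hcond, Measure.restrict_eq_zero.mpr hμ, smul_zero]
    rw [hzero, integral_zero_measure]
    exact mul_nonneg hcpos.le (sq_nonneg _)
  · rcases le_or_gt N0 b with hbig | hsmall
    · -- main regime
      have hval : (∫ ω, Real.sqrt (ξ 0 ω) * Real.sqrt (ξ 1 ω)
            * (if 2 ≤ renewalCount ξ b ω then (1 : ℝ) else 0) ∂(μ[|S]))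
          ≤ (u b)⁻¹ * ∑ p ∈ Finset.Icc 1 b, ∑ q ∈ Finset.Icc 1 (b - p),
              Real.sqrt p * Real.sqrt q * (K p * (K q * u (b - p - q))) :=
        cond_integral_le_sum hmeas hindep hdist hK0 b hb
      have hsum := double_sum_bound CK C1 hCKpos.le hC1pos.le K u hKnonneg hun hCKb hC1b b hb
      have h1 : L / 2 ≤ u b * Real.sqrt b := hN0 b hbig
      have hub : 0 < u b := by
        by_contra hcon
        push_neg at hcon
        nlinarith
      have h2 : L / (2 * Real.sqrt b) ≤ u b := by
        rw [div_le_iff₀ (by positivity)]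
        nlinarith
      have h3 : (u b)⁻¹ ≤ 2 * Real.sqrt b / L := by
        have hpos : 0 < L / (2 * Real.sqrt b) := by positivity
        calc (u b)⁻¹ ≤ (L / (2 * Real.sqrt b))⁻¹ := inv_anti₀ hpos h2
          _ = 2 * Real.sqrt b / L := by rw [inv_div]
      have hSnonneg : 0 ≤ ∑ p ∈ Finset.Icc 1 b, ∑ q ∈ Finset.Icc 1 (b - p),
          Real.sqrt p * Real.sqrt q * (K p * (K q * u (b - p - q))) := by
        apply Finset.sum_nonneg
        intro p _
        apply Finset.sum_nonneg
        intro q _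
        have h5 := hun (b - p - q)
        have h6 := hKnonneg p
        have h7 := hKnonneg q
        positivity
      refine le_trans hval ?_
      calc (u b)⁻¹ * ∑ p ∈ Finset.Icc 1 b, ∑ q ∈ Finset.Icc 1 (b - p),
              Real.sqrt p * Real.sqrt q * (K p * (K q * u (b - p - q)))
          ≤ (2 * Real.sqrt b / L)
              * (36 * Real.sqrt 2 * (CK ^ 2 * C1) * (1 + Real.log b) ^ 2 / Real.sqrt b) :=
            mul_le_mul h3 hsum hSnonneg (by positivity)
        _ = (2 / L) * (36 * Real.sqrt 2 * (CK ^ 2 * C1)) * (1 + Real.log b) ^ 2 := by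
            field_simp
        _ ≤ (2 / L) * (36 * Real.sqrt 2 * (CK ^ 2 * C1))
              * ((1 + 1 / Real.log 2) ^ 2 * (Real.log b) ^ 2) := by
            apply mul_le_mul_of_nonneg_left _ (by positivity)
            rw [← mul_pow]
            apply pow_le_pow_left₀ (by positivity)
            have h4 : 1 ≤ Real.log b / Real.log 2 := (one_le_div hlog2).mpr hlogb2
            have h5 : (1 + 1 / Real.log 2) * Real.log b
                = Real.log b + Real.log b / Real.log 2 := by
              field_simp
            rw [h5]
            linarith
        _ = c1 * (Real.log b) ^ 2 := by
            rw [hc1]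
            ring
        _ ≤ (max c1 c2 + 1) * (Real.log b) ^ 2 := by
            apply mul_le_mul_of_nonneg_right _ (sq_nonneg _)
            have := le_max_left c1 c2
            linarith
    · -- small b
      have hprob : IsProbabilityMeasure (μ[|S]) := by
        rw [hSA]
        exact cond_isProbabilityMeasure hμ
      have hfae := f_ae_bound (μ := μ) (ξ := ξ) hdist hK0 b
      have hle : ae (μ[|S]) ≤ ae μ := by
        rw [hSA]
        exact Measure.AbsolutelyContinuous.ae_le cond_absolutelyContinuous
      have hae2 : ∀ᵐ ω ∂(μ[|S]), ‖Real.sqrt (ξ 0 ω) * Real.sqrt (ξ 1 ω)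
          * (if 2 ≤ renewalCount ξ b ω then (1 : ℝ) else 0)‖ ≤ (b : ℝ) :=
        hfae.filter_mono hle
      have hnorm := norm_integral_le_of_norm_le_const hae2
      rw [measureReal_def, measure_univ, ENNReal.toReal_one, mul_one] at hnorm
      have hval : (∫ ω, Real.sqrt (ξ 0 ω) * Real.sqrt (ξ 1 ω)
            * (if 2 ≤ renewalCount ξ b ω then (1 : ℝ) else 0) ∂(μ[|S])) ≤ (b : ℝ) :=
        le_trans (le_abs_self _) hnorm
      have hbN : (b : ℝ) ≤ (N0 : ℝ) + 2 := by
        have : (b : ℝ) ≤ (N0 : ℝ) := by exact_mod_cast hsmall.le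
        linarith
      have hc2val : c2 * (Real.log 2) ^ 2 = (N0 : ℝ) + 2 := by
        rw [hc2]
        field_simp
      calc (∫ ω, Real.sqrt (ξ 0 ω) * Real.sqrt (ξ 1 ω)
            * (if 2 ≤ renewalCount ξ b ω then (1 : ℝ) else 0) ∂(μ[|S]))
          ≤ (b : ℝ) := hval
        _ ≤ (N0 : ℝ) + 2 := hbN
        _ = c2 * (Real.log 2) ^ 2 := hc2val.symm
        _ ≤ c2 * (Real.log b) ^ 2 := mul_le_mul_of_nonneg_left hsq_log hc2pos
        _ ≤ (max c1 c2 + 1) * (Real.log b) ^ 2 := by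
            apply mul_le_mul_of_nonneg_right _ (sq_nonneg _)
            have := le_max_right c1 c2
            linarith
end

section
/- Let X and Y be independent random walks on ℤ^d (d ≥ 3) with i.i.d. symmetric increments. Fix a renewal set τ with renewal points τ_0 = 0 < τ_1 < ... and let P_τ be the law of Y defined by dP_τ/dP^Y(Y) = E^X[∏_n 𝟙_{X_{τ_n} = Y_{τ_n}}] / E^{X−Y}[∏_n 𝟙_{X_{τ_n} = Y_{τ_n}}]. If τ_{n−1} < i ≤ τ_n and τ_{m−1} < j ≤ τ_m with n ≠ m, then E_τ[Δ_i · Δ_j] = 0, where Δ_i = Y_i − Y_{i−1}. -/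
open MeasureTheory ProbabilityTheory Finset

/-- Position of the walk with increments `η b` at time `n`. -/
noncomputable def walkPos {Ω : Type*} {d : ℕ} (η : Bool × ℕ → Ω → (Fin d → ℤ))
    (b : Bool) (n : ℕ) (ω : Ω) : Fin d → ℤ :=
  ∑ i ∈ Finset.range n, η (b, i) ω


lemma map_pi_of_iIndep {Ω : Type*} [MeasurableSpace Ω] (μ : Measure Ω) [IsProbabilityMeasure μ]
    {V : Type*} [MeasurableSpace V] (η : Bool × ℕ → Ω → V) (hmeas : ∀ p, Measurable (η p))
    (hindep : iIndepFun η μ) (N : ℕ) :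
    Measure.map (fun ω (p : Bool × Fin N) => η (p.1, p.2.val) ω) μ
      = Measure.pi (fun p : Bool × Fin N => Measure.map (η (p.1, p.2.val)) μ) := by
  classical
  haveI : ∀ p : Bool × Fin N, IsProbabilityMeasure (Measure.map (η (p.1, p.2.val)) μ) :=
    fun p => Measure.isProbabilityMeasure_map (hmeas _).aemeasurable
  have hΦ : Measurable (fun ω (p : Bool × Fin N) => η (p.1, p.2.val) ω) :=
    measurable_pi_iff.mpr fun p => hmeas _
  refine (Measure.pi_eq fun s hs => ?_).symm
  rw [Measure.map_apply hΦ (MeasurableSet.univ_pi hs)]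
  set emb : Bool × Fin N → Bool × ℕ := fun p => (p.1, p.2.val) with hembdef
  have hembinj : Function.Injective emb := by
    intro p q h
    simp only [emb, Prod.ext_iff] at h
    exact Prod.ext h.1 (Fin.val_injective h.2)
  set S : Finset (Bool × ℕ) := Finset.univ.image emb with hSdef
  set sets : Bool × ℕ → Set V := fun q => if h : q.2 < N then s (q.1, ⟨q.2, h⟩) else Set.univ
    with hsetsdef
  have hmem : ∀ q : Bool × ℕ, q ∈ S ↔ q.2 < N := by
    intro q
    simp only [hSdef, Finset.mem_image, Finset.mem_univ, true_and]
    constructor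
    · rintro ⟨p, rfl⟩; exact p.2.isLt
    · intro h; exact ⟨(q.1, ⟨q.2, h⟩), rfl⟩
  have hsets : ∀ q, q ∈ S → MeasurableSet (sets q) := by
    intro q hq
    rw [hmem] at hq
    simp only [hsetsdef, dif_pos hq]
    exact hs _
  have h1 : ((fun ω (p : Bool × Fin N) => η (p.1, p.2.val) ω) ⁻¹' Set.pi Set.univ s)
      = ⋂ q ∈ S, η q ⁻¹' sets q := by
    ext ω
    simp only [Set.mem_preimage, Set.mem_pi, Set.mem_univ, true_implies, Set.mem_iInter]
    constructor
    · intro h q hq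
      rw [hmem] at hq
      simp only [hsetsdef, dif_pos hq]
      exact h (q.1, ⟨q.2, hq⟩)
    · intro h p
      have := h (emb p) ((hmem _).2 p.2.isLt)
      simpa only [hsetsdef, emb, dif_pos p.2.isLt] using this
  rw [h1, hindep.measure_inter_preimage_eq_mul S hsets, hSdef,
    Finset.prod_image (fun p _ q _ h => hembinj h)]
  refine Finset.prod_congr rfl fun p _ => ?_
  rw [Measure.map_apply (hmeas _) (hs p)]
  congr 1
  simp only [hsetsdef, emb, dif_pos p.2.isLt]

/-- Let `X, Y` be independent random walks on `ℤ^d` (`d ≥ 3`) with i.i.d. symmetric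
increments, and let `P_τ` be the law of `Y` conditioned on (equivalently, tilted by) the
collision events `X_{τ_k} = Y_{τ_k}`, `1 ≤ k ≤ m`, for a fixed renewal set
`τ_0 = 0 < τ_1 < ⋯ < τ_m`.  If `τ_{n−1} < i ≤ τ_n` and `τ_{m'−1} < j ≤ τ_{m'}` with
`n ≠ m'`, then `E_τ[Δ_i · Δ_j] = 0`, where `Δ_i = Y_i − Y_{i−1}`. -/
theorem tilted_expectation_inner_increments_eq_zero
    {Ω : Type*} [MeasurableSpace Ω] (μ : Measure Ω) [IsProbabilityMeasure μ]
    (d : ℕ) (hd : 3 ≤ d)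
    (η : Bool × ℕ → Ω → (Fin d → ℤ))
    (hmeas : ∀ p, Measurable (η p))
    (hindep : iIndepFun η μ)
    (hidentX : ∀ i : ℕ, Measure.map (η (true, i)) μ = Measure.map (η (true, 0)) μ)
    (hidentY : ∀ i : ℕ, Measure.map (η (false, i)) μ = Measure.map (η (false, 0)) μ)
    (hsymX : Measure.map (fun ω => -(η (true, 0) ω)) μ = Measure.map (η (true, 0)) μ)
    (hsymY : Measure.map (fun ω => -(η (false, 0) ω)) μ = Measure.map (η (false, 0)) μ)
    (τ : ℕ → ℕ) (hτ0 : τ 0 = 0) (hτmono : StrictMono τ)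
    (m : ℕ)
    (hpos : 0 < μ {ω | ∀ k ∈ Finset.Icc 1 m, walkPos η true (τ k) ω = walkPos η false (τ k) ω})
    (n m' i j : ℕ) (hn1 : 1 ≤ n) (hnm : n ≤ m) (hm'1 : 1 ≤ m') (hm'm : m' ≤ m)
    (hne : n ≠ m')
    (hi1 : τ (n - 1) < i) (hi2 : i ≤ τ n) (hj1 : τ (m' - 1) < j) (hj2 : j ≤ τ m') :
    (∫ ω, (∑ e : Fin d, (η (false, i - 1) ω e : ℝ) * (η (false, j - 1) ω e : ℝ))
        ∂(μ[|{ω | ∀ k ∈ Finset.Icc 1 m,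
            walkPos η true (τ k) ω = walkPos η false (τ k) ω}])) = 0 := by
  classical
  set E := {ω | ∀ k ∈ Finset.Icc 1 m, walkPos η true (τ k) ω = walkPos η false (τ k) ω}
    with hEdef
  set N := τ m with hNdef
  have hτnm : τ n ≤ N := hτmono.monotone hnm
  have hτm'm : τ m' ≤ N := hτmono.monotone hm'm
  have hiN : i - 1 < N := by omega
  have hjN : j - 1 < N := by omega
  set I : Bool × Fin N := (false, ⟨i - 1, hiN⟩) with hIdef
  set J : Bool × Fin N := (false, ⟨j - 1, hjN⟩) with hJdef
  set c : Bool × Fin N → Prop := fun p => τ (n - 1) ≤ p.2.val ∧ p.2.val < τ n with hcdef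
  set Φ : Ω → (Bool × Fin N) → (Fin d → ℤ) := fun ω p => η (p.1, p.2.val) ω with hΦdef
  set F : ((Bool × Fin N) → (Fin d → ℤ)) → ((Bool × Fin N) → (Fin d → ℤ)) :=
    fun x p => if c p then -x p else x p with hFdef
  set ft : ((Bool × Fin N) → (Fin d → ℤ)) → ℝ :=
    fun x => ∑ e : Fin d, ((x I e : ℝ) * (x J e : ℝ)) with hftdef
  set Et : Set ((Bool × Fin N) → (Fin d → ℤ)) :=
    {x | ∀ k ∈ Finset.Icc 1 m, (∑ l : Fin N, if l.val < τ k then x (true, l) else 0)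
        = ∑ l : Fin N, if l.val < τ k then x (false, l) else 0} with hEtdef
  set g := Et.indicator ft with hgdef
  set ν : (Bool × Fin N) → Measure (Fin d → ℤ) :=
    fun p => Measure.map (η (p.1, p.2.val)) μ with hνdef
  haveI hprob : ∀ p : Bool × Fin N, IsProbabilityMeasure (ν p) :=
    fun p => Measure.isProbabilityMeasure_map (hmeas _).aemeasurable
  -- measurability facts
  have hΦmeas : Measurable Φ := measurable_pi_iff.mpr fun p => hmeas _
  have hFmeas : Measurable F := by
    refine measurable_pi_iff.mpr fun p => ?_
    by_cases h : c p
    · simp only [hFdef, if_pos h]; exact measurable_neg.comp (measurable_pi_apply p)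
    · simpa only [hFdef, if_neg h] using measurable_pi_apply p
  have hsummeas : ∀ (b : Bool) (t : ℕ),
      Measurable (fun x : (Bool × Fin N) → Fin d → ℤ =>
        ∑ l : Fin N, if l.val < t then x (b, l) else 0) := by
    intro b t
    refine Finset.measurable_sum _ fun l _ => ?_
    by_cases h : l.val < t
    · simpa only [if_pos h] using measurable_pi_apply (b, l)
    · simpa only [if_neg h] using measurable_const
  have hEtmeas : MeasurableSet Et := by
    have hEq : Et = ⋂ k ∈ Finset.Icc 1 m,
        {x : (Bool × Fin N) → Fin d → ℤ |
          (∑ l : Fin N, if l.val < τ k then x (true, l) else 0)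
            = ∑ l : Fin N, if l.val < τ k then x (false, l) else 0} := by
      ext x; simp [hEtdef]
    rw [hEq]
    exact MeasurableSet.biInter (Finset.Icc 1 m).countable_toSet fun k _ =>
      measurableSet_eq_fun (hsummeas true (τ k)) (hsummeas false (τ k))
  have hftmeas : Measurable ft := by
    refine Finset.measurable_sum _ fun e _ => Measurable.mul ?_ ?_ <;>
      exact measurable_from_top.comp ((measurable_pi_apply e).comp (measurable_pi_apply _))
  have hgmeas : Measurable g := hftmeas.indicator hEtmeas
  -- E = Φ ⁻¹' Et
  have hsum : ∀ (b : Bool) (t : ℕ), t ≤ N → ∀ ω,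
      walkPos η b t ω = ∑ l : Fin N, if l.val < t then Φ ω (b, l) else 0 := by
    intro b t ht ω
    have h1 : (∑ l : Fin N, if l.val < t then Φ ω (b, l) else 0)
        = ∑ l ∈ Finset.range N, if l < t then η (b, l) ω else 0 :=
      Fin.sum_univ_eq_sum_range (fun l => if l < t then η (b, l) ω else 0) N
    rw [h1, ← Finset.sum_filter]
    have h2 : (Finset.range N).filter (fun l => l < t) = Finset.range t := by
      ext a; simp only [Finset.mem_filter, Finset.mem_range]; omega
    rw [h2]; rfl
  have hEeq : E = Φ ⁻¹' Et := by
    ext ω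
    simp only [hEdef, Set.mem_setOf_eq, Set.mem_preimage, hEtdef]
    refine forall₂_congr fun k hk => ?_
    have hkm : τ k ≤ N := hτmono.monotone (Finset.mem_Icc.mp hk).2
    rw [hsum true (τ k) hkm ω, hsum false (τ k) hkm ω]
  have hEmeas : MeasurableSet E := by rw [hEeq]; exact hΦmeas hEtmeas
  -- flip properties
  have hFF : ∀ x, F (F x) = x := by
    intro x; funext p
    simp only [hFdef]
    by_cases h : c p
    · rw [if_pos h, if_pos h, neg_neg]
    · rw [if_neg h, if_neg h]
  have hcI : c I := by simp only [hcdef, hIdef]; omega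
  have hcJ : ¬ c J := by
    simp only [hcdef, hJdef, not_and]
    rcases lt_or_gt_of_ne hne with h | h
    · have h1 : τ n ≤ τ (m' - 1) := hτmono.monotone (by omega)
      omega
    · have h1 : τ m' ≤ τ (n - 1) := hτmono.monotone (by omega)
      omega
  have hFEt : ∀ x ∈ Et, F x ∈ Et := by
    intro x hx k hk
    have hk' := Finset.mem_Icc.mp hk
    by_cases hkn : k < n
    · have hkτ : τ k ≤ τ (n - 1) := hτmono.monotone (by omega)
      have hterm : ∀ (b : Bool) (l : Fin N),
          (if l.val < τ k then F x (b, l) else 0) = (if l.val < τ k then x (b, l) else 0) := by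
        intro b l
        by_cases h : l.val < τ k
        · have hnc : ¬ c (b, l) := by simp only [hcdef]; omega
          rw [if_pos h, if_pos h]
          simp only [hFdef]
          rw [if_neg hnc]
        · rw [if_neg h, if_neg h]
      calc (∑ l : Fin N, if l.val < τ k then F x (true, l) else 0)
          = ∑ l : Fin N, if l.val < τ k then x (true, l) else 0 :=
            Finset.sum_congr rfl fun l _ => hterm true l
        _ = ∑ l : Fin N, if l.val < τ k then x (false, l) else 0 := hx k hk
        _ = ∑ l : Fin N, if l.val < τ k then F x (false, l) else 0 :=
            (Finset.sum_congr rfl fun l _ => (hterm false l).symm)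
    · -- n ≤ k
      have hτnk : τ n ≤ τ k := hτmono.monotone (by omega)
      have hτn1n : τ (n - 1) ≤ τ n := hτmono.monotone (by omega)
      have hterm : ∀ (b : Bool) (l : Fin N),
          (if l.val < τ k then F x (b, l) else 0)
            = (if l.val < τ k then x (b, l) else 0)
              - (if c (b, l) then x (b, l) + x (b, l) else 0) := by
        intro b l
        by_cases hc1 : c (b, l)
        · have hlk : l.val < τ k := by
            have hc2 := hc1; simp only [hcdef] at hc2; omega
          rw [if_pos hlk, if_pos hlk, if_pos hc1]
          simp only [hFdef]
          rw [if_pos hc1]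
          abel
        · rw [if_neg hc1, sub_zero]
          by_cases h : l.val < τ k
          · rw [if_pos h, if_pos h]
            simp only [hFdef]
            rw [if_neg hc1]
          · rw [if_neg h, if_neg h]
      have hsumterm : ∀ b : Bool,
          (∑ l : Fin N, if l.val < τ k then F x (b, l) else 0)
            = (∑ l : Fin N, if l.val < τ k then x (b, l) else 0)
              - ∑ l : Fin N, (if c (b, l) then x (b, l) + x (b, l) else 0) := by
        intro b
        rw [← Finset.sum_sub_distrib]
        exact Finset.sum_congr rfl fun l _ => hterm b l
      have hD : ∀ b : Bool,
          (∑ l : Fin N, if c (b, l) then x (b, l) else 0)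
            = (∑ l : Fin N, if l.val < τ n then x (b, l) else 0)
              - ∑ l : Fin N, (if l.val < τ (n - 1) then x (b, l) else 0) := by
        intro b
        rw [← Finset.sum_sub_distrib]
        refine Finset.sum_congr rfl fun l _ => ?_
        by_cases h1 : l.val < τ (n - 1)
        · have h2 : l.val < τ n := by omega
          have hnc : ¬ c (b, l) := by simp only [hcdef]; omega
          rw [if_neg hnc, if_pos h1, if_pos h2, sub_self]
        · by_cases h2 : l.val < τ n
          · have hc1 : c (b, l) := by simp only [hcdef]; omega
            rw [if_pos hc1, if_neg h1, if_pos h2, sub_zero]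
          · have hnc : ¬ c (b, l) := by simp only [hcdef]; omega
            rw [if_neg hnc, if_neg h1, if_neg h2, sub_self]
      have hτn1eq : (∑ l : Fin N, if l.val < τ (n - 1) then x (true, l) else 0)
          = ∑ l : Fin N, if l.val < τ (n - 1) then x (false, l) else 0 := by
        by_cases hn1' : n = 1
        · have hz : τ (n - 1) = 0 := by rw [show n - 1 = 0 by omega, hτ0]
          simp [hz]
        · exact hx (n - 1) (Finset.mem_Icc.mpr (by omega))
      have hτneq : (∑ l : Fin N, if l.val < τ n then x (true, l) else 0)
          = ∑ l : Fin N, if l.val < τ n then x (false, l) else 0 :=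
        hx n (Finset.mem_Icc.mpr ⟨hn1, hnm⟩)
      have hDeq : (∑ l : Fin N, if c (true, l) then x (true, l) else 0)
          = ∑ l : Fin N, if c (false, l) then x (false, l) else 0 := by
        rw [hD true, hD false, hτn1eq, hτneq]
      have hDsumeq : (∑ l : Fin N, if c (true, l) then x (true, l) + x (true, l) else 0)
          = ∑ l : Fin N, (if c (false, l) then x (false, l) + x (false, l) else 0) := by
        have h1 : ∀ (b : Bool) (l : Fin N), (if c (b, l) then x (b, l) + x (b, l) else 0)
            = (if c (b, l) then x (b, l) else 0) + (if c (b, l) then x (b, l) else 0) := by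
          intro b l
          by_cases h : c (b, l)
          · rw [if_pos h, if_pos h]
          · rw [if_neg h, if_neg h, add_zero]
        simp_rw [h1, Finset.sum_add_distrib, hDeq]
      rw [hsumterm true, hsumterm false, hx k hk, hDsumeq]
  have hFmem : ∀ x, F x ∈ Et ↔ x ∈ Et := by
    intro x
    constructor
    · intro h; have := hFEt _ h; rwa [hFF] at this
    · exact hFEt x
  have hgF : ∀ x, g (F x) = - g x := by
    intro x
    by_cases hx : x ∈ Et
    · rw [hgdef, Set.indicator_of_mem ((hFmem x).mpr hx), Set.indicator_of_mem hx]
      have h1 : F x I = -x I := by simp only [hFdef]; rw [if_pos hcI]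
      have h2 : F x J = x J := by simp only [hFdef]; rw [if_neg hcJ]
      simp only [hftdef, h1, h2, ← Finset.sum_neg_distrib]
      refine Finset.sum_congr rfl fun e _ => ?_
      push_cast [Pi.neg_apply]
      ring
    · rw [hgdef, Set.indicator_of_notMem (fun h => hx ((hFmem x).mp h)),
        Set.indicator_of_notMem hx, neg_zero]
  -- measure preservation
  have hkey : ∀ (b : Bool) (l : ℕ),
      Measure.map (fun v : Fin d → ℤ => -v) (Measure.map (η (b, l)) μ)
        = Measure.map (η (b, l)) μ := by
    intro b l
    have hid : Measure.map (η (b, l)) μ = Measure.map (η (b, 0)) μ := by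
      cases b
      · exact hidentY l
      · exact hidentX l
    rw [hid, Measure.map_map measurable_neg (hmeas _)]
    cases b
    · exact hsymY
    · exact hsymX
  haveI hsf : ∀ p : Bool × Fin N, SigmaFinite (ν p) := fun p => inferInstance
  have hFpres : MeasurePreserving F (Measure.pi ν) (Measure.pi ν) := by
    have h := measurePreserving_pi ν ν (f := fun p (v : Fin d → ℤ) => if c p then -v else v)
      (fun p => ?_)
    · exact h
    · by_cases hc1 : c p
      · simp only [if_pos hc1]
        exact ⟨measurable_neg, hkey p.1 p.2.val⟩
      · simp only [if_neg hc1]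
        exact MeasurePreserving.id _
  have hlaw : Measure.map Φ μ = Measure.pi ν := map_pi_of_iIndep μ η hmeas hindep N
  -- the symmetric integral vanishes
  have hint : ∫ x, g x ∂(Measure.pi ν) = 0 := by
    have h1 : ∫ x, g x ∂(Measure.pi ν) = ∫ x, g (F x) ∂(Measure.pi ν) := by
      conv_lhs => rw [← hFpres.map_eq]
      rw [integral_map hFmeas.aemeasurable hgmeas.aestronglyMeasurable]
    have h2 : ∫ x, g (F x) ∂(Measure.pi ν) = - ∫ x, g x ∂(Measure.pi ν) := by
      simp only [hgF]
      exact integral_neg _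
    linarith [h1.trans h2]
  -- conditional expectation
  have hcond : μ[|E] = (μ E)⁻¹ • μ.restrict E := rfl
  rw [hcond, integral_smul_measure]
  have hrest : (∫ ω, (∑ e : Fin d, (η (false, i - 1) ω e : ℝ) * (η (false, j - 1) ω e : ℝ))
      ∂(μ.restrict E)) = 0 := by
    rw [← integral_indicator hEmeas]
    have hindic : E.indicator
        (fun ω => ∑ e : Fin d, (η (false, i - 1) ω e : ℝ) * (η (false, j - 1) ω e : ℝ))
        = fun ω => g (Φ ω) := by
      funext ω
      by_cases hω : ω ∈ E
      · have hω' : Φ ω ∈ Et := by rw [hEeq] at hω; exact hω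
        rw [Set.indicator_of_mem hω, hgdef, Set.indicator_of_mem hω']
      · have hω' : Φ ω ∉ Et := by rw [hEeq] at hω; exact hω
        rw [Set.indicator_of_notMem hω, hgdef, Set.indicator_of_notMem hω']
    rw [hindic, ← integral_map hΦmeas.aemeasurable hgmeas.aestronglyMeasurable, hlaw, hint]
  rw [hrest, smul_zero]
end
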